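/- arXiv:2010.15512 — 7 statements merged into one kernel-verified Lean document; each statement's English description precedes it below -/
import Mathlib

section
/- Mortici's formula is asymptotic to the Gamma function: lim_{x→∞} Γ(x+1) / (√(2πx)·(x/e + 1/(12ex))^x) = 1. -/
set_option maxHeartbeats 1000000
open Real Filter

noncomputable def Aseq (n : ℕ) : ℝ :=
  (n.factorial : ℝ) / (Real.sqrt (2 * π * n) * ((n : ℝ) / exp 1) ^ n)

lemma Aseq_eq (n : ℕ) : Aseq n = Stirling.stirlingSeq n / Real.sqrt π := by
  rw [Aseq, Stirling.stirlingSeq]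
  rw [show (2 : ℝ) * π * n = π * (2 * n) by ring, Real.sqrt_mul pi_pos.le]
  rw [div_div]
  ring_nf

lemma Aseq_tendsto : Tendsto Aseq atTop (nhds 1) := by
  have h := Stirling.tendsto_stirlingSeq_sqrt_pi.div_const (Real.sqrt π)
  rw [div_self (by positivity : Real.sqrt π ≠ 0)] at h
  simpa [funext Aseq_eq] using h

lemma aux_tendsto1 : Tendsto (fun n : ℕ => ((n : ℝ) + 1) / n) atTop (nhds 1) := by
  have h : Tendsto (fun n : ℕ => 1 + 1 / (n:ℝ)) atTop (nhds (1 + 0)) :=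
    tendsto_const_nhds.add tendsto_one_div_atTop_nhds_zero_nat
  rw [add_zero] at h
  refine h.congr' ?_
  filter_upwards [eventually_ge_atTop 1] with n hn
  have : (0:ℝ) < n := by exact_mod_cast hn
  field_simp
lemma aux_tendsto2 : Tendsto (fun n : ℕ => (n : ℝ) / (n + 1)) atTop (nhds 1) := by
  have h := aux_tendsto1.inv₀ one_ne_zero
  rw [inv_one] at h
  refine h.congr ?_
  intro n
  rw [inv_div]


lemma logGamma_upper' {a t : ℝ} (ha : 0 < a) (ht0 : 0 ≤ t) (ht1 : t ≤ 1) :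
    log (Gamma (a + t)) ≤ (1 - t) * log (Gamma a) + t * log (Gamma (a + 1)) := by
  have h := Real.convexOn_log_Gamma.2 (Set.mem_Ioi.mpr ha)
      (Set.mem_Ioi.mpr (by linarith : (0:ℝ) < a + 1)) (by linarith : (0:ℝ) ≤ 1 - t) ht0
      (by ring)
  simpa [smul_eq_mul, Function.comp, show (1 - t) * a + t * (a + 1) = a + t by ring] using h

lemma logGamma_lower' {a t : ℝ} (ha : 0 < a) (ht0 : 0 ≤ t) :
    (1 + t) * log (Gamma (a + 1)) - t * log (Gamma a) ≤ log (Gamma (a + 1 + t)) := by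
  have hs : (0:ℝ) < 1 + t := by linarith
  have h := Real.convexOn_log_Gamma.2 (Set.mem_Ioi.mpr ha)
      (Set.mem_Ioi.mpr (by linarith : (0:ℝ) < a + 1 + t))
      (by positivity : (0:ℝ) ≤ t / (1 + t)) (by positivity : (0:ℝ) ≤ 1 / (1 + t))
      (by field_simp; ring)
  have hpt : t / (1 + t) * a + 1 / (1 + t) * (a + 1 + t) = a + 1 := by field_simp; ring
  simp only [smul_eq_mul] at h
  rw [hpt] at h
  simp only [Function.comp_apply] at h
  have := mul_le_mul_of_nonneg_left h hs.le
  rw [mul_add] at this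
  have e1 : (1 + t) * (t / (1 + t) * log (Gamma a)) = t * log (Gamma a) := by field_simp
  have e2 : (1 + t) * (1 / (1 + t) * log (Gamma (a + 1 + t))) = log (Gamma (a + 1 + t)) := by
    field_simp
  rw [e1, e2] at this
  linarith

lemma main_bounds {x : ℝ} (hx : 2 ≤ x) :
    Aseq ⌊x⌋₊ * ((⌊x⌋₊ : ℝ) / (⌊x⌋₊ + 1)) ^ 2 * Real.sqrt ((⌊x⌋₊ : ℝ) / (⌊x⌋₊ + 1)) ≤
        Gamma (x + 1) / (Real.sqrt (2 * π * x) * (x / exp 1) ^ x) ∧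
      Gamma (x + 1) / (Real.sqrt (2 * π * x) * (x / exp 1) ^ x) ≤
        Aseq ⌊x⌋₊ * (((⌊x⌋₊ : ℝ) + 1) / ⌊x⌋₊) ^ 2 * exp (1 / ⌊x⌋₊) := by
  have hx0 : (0:ℝ) < x := by linarith
  set n : ℕ := ⌊x⌋₊ with hn
  set N : ℝ := (n : ℝ) with hN
  have h2n : (2:ℕ) ≤ n := Nat.le_floor (by exact_mod_cast hx)
  have hN2 : (2:ℝ) ≤ N := by rw [hN]; exact_mod_cast h2n
  have hN0 : (0:ℝ) < N := by linarith
  have hNx : N ≤ x := Nat.floor_le hx0.le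
  have hxN : x < N + 1 := Nat.lt_floor_add_one x
  set t : ℝ := x - N with htdef
  have hxNt : x = N + t := by rw [htdef]; ring
  clear_value t N n
  have ht0 : 0 ≤ t := by simp [htdef]; linarith
  have ht1 : t < 1 := by simp [htdef]; linarith
  -- log expansions
  have hlogS : log (Real.sqrt (2 * π * x) * (x / exp 1) ^ x) =
      (log (2 * π) + log x) / 2 + x * (log x - 1) := by
    rw [log_mul (by positivity) (by positivity), log_sqrt (by positivity),
      log_rpow (by positivity), log_mul (by positivity) hx0.ne', log_div hx0.ne'
      (exp_ne_zero 1), log_exp]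
    try ring
  have h2piN : (0:ℝ) < 2 * π * N := mul_pos (mul_pos two_pos pi_pos) hN0
  have hpowN : (0:ℝ) < (N / exp 1) ^ n := pow_pos (div_pos hN0 (exp_pos 1)) n
  have hlogA : log (Aseq n) = log (n.factorial : ℝ) -
      ((log (2 * π) + log N) / 2 + N * (log N - 1)) := by
    rw [Aseq, ← hN,
      log_div (by exact_mod_cast n.factorial_pos.ne')
        (mul_pos (Real.sqrt_pos.mpr h2piN) hpowN).ne',
      log_mul (Real.sqrt_pos.mpr h2piN).ne' hpowN.ne', log_sqrt h2piN.le,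
      log_mul (by positivity : (2 * π : ℝ) ≠ 0) hN0.ne', log_pow,
      log_div hN0.ne' (exp_ne_zero 1), log_exp, ← hN]
    try ring
  -- Gamma log bounds
  have hGamN : Gamma (N + 1) = (n.factorial : ℝ) := by
    rw [hN]; exact Real.Gamma_nat_eq_factorial n
  have hGamN0 : 0 < Gamma N := Real.Gamma_pos_of_pos hN0
  have hGamrec : log (Gamma (N + 1)) = log N + log (Gamma N) := by
    rw [Real.Gamma_add_one hN0.ne', log_mul hN0.ne' hGamN0.ne']
  have hΓup : log (Gamma (x + 1)) ≤ log (n.factorial : ℝ) + t * log (N + 1) := by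
    have h := logGamma_upper' (a := N + 1) (t := t) (by linarith) ht0 ht1.le
    rw [show N + 1 + t = x + 1 by simp [htdef]; ring] at h
    have hrec2 : log (Gamma (N + 1 + 1)) = log (N + 1) + log (Gamma (N + 1)) := by
      rw [Real.Gamma_add_one (by positivity : N + 1 ≠ 0),
        log_mul (by positivity : N + 1 ≠ 0) (by rw [hGamN]; positivity)]
    rw [hrec2, hGamN] at h
    nlinarith [h]
  have hΓlo : log (n.factorial : ℝ) + t * log N ≤ log (Gamma (x + 1)) := by
    have h := logGamma_lower' (a := N) (t := t) hN0 ht0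
    rw [show N + 1 + t = x + 1 by simp [htdef]; ring] at h
    rw [hGamrec] at h
    have hfact : log (n.factorial : ℝ) = log N + log (Gamma N) := by rw [← hGamN, hGamrec]
    nlinarith [h, hfact]
  -- analytic log facts
  have f1 : log N ≤ log x := Real.log_le_log hN0 hNx
  have f2 : log x ≤ log (N + 1) := Real.log_le_log hx0 hxN.le
  have f6 : log N ≤ log (N + 1) := Real.log_le_log hN0 (by linarith)
  have f3 : log N + t / (N + 1) ≤ log x := by
    have h := Real.one_sub_inv_le_log_of_pos (div_pos hx0 hN0)
    rw [log_div hx0.ne' hN0.ne', inv_div] at h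
    have e : 1 - N / x = t / x := by rw [htdef]; field_simp
    rw [e] at h
    have h2 : t / (N + 1) ≤ t / x := by gcongr <;> linarith
    linarith
  have f4 : log x ≤ log N + t / N := by
    have h := Real.log_le_sub_one_of_pos (div_pos hx0 hN0)
    rw [log_div hx0.ne' hN0.ne'] at h
    have e : x / N - 1 = t / N := by rw [htdef]; field_simp
    linarith
  have f5 : 0 ≤ log N := Real.log_nonneg (by linarith)
  have f7 : 1 / (N + 1) ≤ log (N + 1) - log N := by
    have h := Real.one_sub_inv_le_log_of_pos (show (0:ℝ) < (N + 1) / N by positivity)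
    rw [log_div (by linarith : N + 1 ≠ 0) hN0.ne', inv_div] at h
    have e : 1 - N / (N + 1) = 1 / (N + 1) := by field_simp; ring
    linarith [e ▸ h]
  -- positivity
  have hA0 : 0 < Aseq n := by
    rw [Aseq, ← hN]
    exact div_pos (by exact_mod_cast n.factorial_pos)
      (mul_pos (Real.sqrt_pos.mpr h2piN) hpowN)
  have hS0 : 0 < Real.sqrt (2 * π * x) * (x / exp 1) ^ x := by positivity
  have hG0 : 0 < Gamma (x + 1) := Real.Gamma_pos_of_pos (by linarith)
  have hF0 : 0 < Gamma (x + 1) / (Real.sqrt (2 * π * x) * (x / exp 1) ^ x) := div_pos hG0 hS0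
  have hNN1 : (0:ℝ) < N / (N + 1) := by positivity
  constructor
  · -- lower bound
    have hgl0 : 0 < Aseq n * (N / (N + 1)) ^ 2 * Real.sqrt (N / (N + 1)) := by positivity
    refine (Real.log_le_log_iff hgl0 hF0).mp ?_
    rw [log_div hG0.ne' hS0.ne', hlogS,
      log_mul (mul_pos hA0 (pow_pos hNN1 2)).ne' (Real.sqrt_pos.mpr hNN1).ne',
      log_mul hA0.ne' (pow_pos hNN1 2).ne', log_pow, log_sqrt hNN1.le,
      log_div hN0.ne' (by linarith : N + 1 ≠ 0), hlogA]
    have hmul : x * log x ≤ x * (log N + t / N) := mul_le_mul_of_nonneg_left f4 hx0.le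
    have hid : x * (log N + t / N) = N * log N + t * log N + t + t ^ 2 / N := by
      rw [htdef]; field_simp; ring
    have ht2 : t ^ 2 ≤ 1 := pow_le_one₀ ht0 ht1.le
    have htN : t ^ 2 * N ≤ 1 * N := mul_le_mul_of_nonneg_right ht2 (by linarith)
    have hx4 : t ^ 2 / N ≤ 2 * (1 / (N + 1)) := by
      rw [mul_one_div, div_le_div_iff₀ hN0 (by linarith)]; linarith
    push_cast
    linarith [hΓlo, hmul, hid, hx4, f2, f7]
  · -- upper bound
    have hgu0 : 0 < Aseq n * ((N + 1) / N) ^ 2 * exp (1 / N) := by positivity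
    refine (Real.log_le_log_iff hF0 hgu0).mp ?_
    rw [log_div hG0.ne' hS0.ne', hlogS,
      log_mul (mul_pos hA0 (pow_pos (by positivity : (0:ℝ) < (N + 1) / N) 2)).ne'
        (exp_pos _).ne',
      log_mul hA0.ne' (pow_pos (by positivity : (0:ℝ) < (N + 1) / N) 2).ne', log_pow, log_exp,
      log_div (by linarith : N + 1 ≠ 0) hN0.ne', hlogA]
    have hua : N * (log N + t / (N + 1)) ≤ N * log x := mul_le_mul_of_nonneg_left f3 hN0.le
    have hub : t * log N ≤ t * log x := mul_le_mul_of_nonneg_left f1 ht0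
    have huc : x * log x = N * log x + t * log x := by rw [htdef]; ring
    have hud : N * (log N + t / (N + 1)) = N * log N + t - t / (N + 1) := by
      field_simp; ring
    have hue : t / (N + 1) ≤ 1 / N := by
      rw [div_le_div_iff₀ (by linarith) hN0]; nlinarith [ht0, ht1.le, hN0]
    have huf : t * (log (N + 1) - log N) ≤ log (N + 1) - log N :=
      mul_le_of_le_one_left (sub_nonneg.mpr f6) ht1.le
    push_cast
    linarith [hΓup, hua, hub, huc, hud, hue, huf, f1]


lemma stirling_real :
    Tendsto (fun x : ℝ => Gamma (x + 1) / (Real.sqrt (2 * π * x) * (x / exp 1) ^ x))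
      atTop (nhds 1) := by
  have hgl : Tendsto (fun n : ℕ => Aseq n * ((n : ℝ) / (n + 1)) ^ 2 *
      Real.sqrt ((n : ℝ) / (n + 1))) atTop (nhds 1) := by
    have h := (Aseq_tendsto.mul (aux_tendsto2.pow 2)).mul aux_tendsto2.sqrt
    simpa using h
  have hgu : Tendsto (fun n : ℕ => Aseq n * (((n : ℝ) + 1) / n) ^ 2 * exp (1 / n))
      atTop (nhds 1) := by
    have hexp : Tendsto (fun n : ℕ => exp (1 / (n : ℝ))) atTop (nhds 1) := by
      have h := (Real.continuous_exp.tendsto 0).comp tendsto_one_div_atTop_nhds_zero_nat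
      simpa [Function.comp_def, Real.exp_zero] using h
    simpa using (Aseq_tendsto.mul (aux_tendsto1.pow 2)).mul hexp
  have hfloor : Tendsto (fun x : ℝ => ⌊x⌋₊) atTop atTop := tendsto_nat_floor_atTop
  refine tendsto_of_tendsto_of_tendsto_of_le_of_le'
    (g := fun x : ℝ => Aseq ⌊x⌋₊ * ((⌊x⌋₊ : ℝ) / (⌊x⌋₊ + 1)) ^ 2 *
      Real.sqrt ((⌊x⌋₊ : ℝ) / (⌊x⌋₊ + 1)))
    (h := fun x : ℝ => Aseq ⌊x⌋₊ * (((⌊x⌋₊ : ℝ) + 1) / ⌊x⌋₊) ^ 2 * exp (1 / ⌊x⌋₊))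
    (hgl.comp hfloor) (hgu.comp hfloor) ?_ ?_
  · filter_upwards [eventually_ge_atTop (2 : ℝ)] with x hx
    exact (main_bounds hx).1
  · filter_upwards [eventually_ge_atTop (2 : ℝ)] with x hx
    exact (main_bounds hx).2

theorem stmt_4 :
    Tendsto (fun x : ℝ => Gamma (x + 1) /
      (Real.sqrt (2 * π * x) * (x / exp 1 + 1 / (12 * exp 1 * x)) ^ x)) atTop (nhds 1) := by
  have hP : Tendsto (fun x : ℝ => (1 + 1 / (12 * x ^ 2)) ^ x) atTop (nhds 1) := by
    have h12x : Tendsto (fun x : ℝ => 1 / (12 * x)) atTop (nhds 0) :=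
      tendsto_const_nhds.div_atTop (tendsto_id.const_mul_atTop (by norm_num : (0:ℝ) < 12))
    have hlog : Tendsto (fun x : ℝ => x * log (1 + 1 / (12 * x ^ 2))) atTop (nhds 0) := by
      refine tendsto_of_tendsto_of_tendsto_of_le_of_le' tendsto_const_nhds h12x ?_ ?_
      · filter_upwards [eventually_gt_atTop (0 : ℝ)] with x hx
        have hu : (0:ℝ) ≤ 1 / (12 * x ^ 2) := by positivity
        exact mul_nonneg hx.le (Real.log_nonneg (by linarith))
      · filter_upwards [eventually_gt_atTop (0 : ℝ)] with x hx
        have hu : (0:ℝ) < 1 + 1 / (12 * x ^ 2) := by positivity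
        have h1 := Real.log_le_sub_one_of_pos hu
        have h2 : x * (1 + 1 / (12 * x ^ 2) - 1) = 1 / (12 * x) := by
          field_simp
          ring
        calc x * log (1 + 1 / (12 * x ^ 2)) ≤ x * (1 + 1 / (12 * x ^ 2) - 1) :=
              mul_le_mul_of_nonneg_left h1 hx.le
          _ = 1 / (12 * x) := h2
    have h := (Real.continuous_exp.tendsto 0).comp hlog
    rw [Real.exp_zero] at h
    refine h.congr' ?_
    filter_upwards [eventually_gt_atTop (0 : ℝ)] with x hx
    rw [Function.comp_apply, Real.rpow_def_of_pos (by positivity), mul_comm]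
  have key := stirling_real.div hP one_ne_zero
  rw [div_one] at key
  refine key.congr' ?_
  filter_upwards [eventually_gt_atTop (0 : ℝ)] with x hx
  have hD : x / exp 1 + 1 / (12 * exp 1 * x) = (x / exp 1) * (1 + 1 / (12 * x ^ 2)) := by
    field_simp
  simp only [Pi.div_apply]
  rw [hD, Real.mul_rpow (by positivity) (by positivity), div_div, mul_assoc]
end

section
/- Ramanujan's formula is asymptotic to the Gamma function: lim_{x→∞} Γ(x+1) / (√π·(x/e)^x·(8x³ + 4x² + x + 1/30)^(1/6)) = 1. -/
open Real Filter

section StirlingAux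

open Set Asymptotics

noncomputable def ell (x : ℝ) : ℝ :=
  Real.log (Gamma (x+1)) - (x * Real.log x - x + Real.log (Real.sqrt (2*π*x)))

lemma stirling_nat : Tendsto (fun n : ℕ => (Nat.factorial n : ℝ) /
    (Real.sqrt (2 * n * π) * ((n:ℝ) / exp 1) ^ n)) atTop (nhds 1) := by
  have h := Stirling.factorial_isEquivalent_stirling
  rw [Asymptotics.isEquivalent_iff_tendsto_one] at h
  · exact h
  · filter_upwards [eventually_ge_atTop 1] with n hn
    have h0 : (0:ℝ) < n := by exact_mod_cast hn
    positivity

lemma ell_nat_tendsto : Tendsto (fun n : ℕ => ell n) atTop (nhds 0) := by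
  have h1 : Tendsto (fun n : ℕ => Real.log ((Nat.factorial n : ℝ) /
      (Real.sqrt (2 * n * π) * ((n:ℝ) / exp 1) ^ n))) atTop (nhds 0) := by
    have := (Real.continuousAt_log one_ne_zero).tendsto.comp stirling_nat
    simpa [Function.comp_def] using this
  apply h1.congr'
  filter_upwards [eventually_ge_atTop 1] with n hn
  have h0 : (0:ℝ) < n := by exact_mod_cast hn
  have hfac : (0:ℝ) < Nat.factorial n := by exact_mod_cast n.factorial_pos
  have hsq : (0:ℝ) < Real.sqrt (2 * n * π) := by positivity
  have hpw : (0:ℝ) < ((n:ℝ) / exp 1) ^ n := by positivity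
  rw [Real.log_div (ne_of_gt hfac) (by positivity), Real.log_mul (ne_of_gt hsq) (ne_of_gt hpw),
    Real.log_pow, Real.log_div (ne_of_gt h0) (exp_ne_zero 1), Real.log_exp]
  show _ = ell n
  unfold ell
  rw [show ((n:ℝ) + 1) = ((n:ℕ):ℝ) + 1 by norm_num, Real.Gamma_nat_eq_factorial,
    show 2*π*(n:ℝ) = 2*(n:ℝ)*π by ring]
  ring

lemma gautschi_log {n : ℕ} (hn : 1 ≤ n) {t : ℝ} (ht0 : 0 ≤ t) (ht1 : t < 1) :
    Real.log (Nat.factorial n : ℝ) + t * Real.log n ≤ Real.log (Gamma ((n:ℝ) + t + 1)) ∧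
    Real.log (Gamma ((n:ℝ) + t + 1)) ≤ Real.log (Nat.factorial n : ℝ) + t * Real.log ((n:ℝ)+1) := by
  have hn1 : (1:ℝ) ≤ (n:ℝ) := by exact_mod_cast hn
  have h0n : (0:ℝ) < n := by linarith
  have hcv := convexOn_log_Gamma.2
  constructor
  · -- lower bound: log n! ≤ (1-t) log Γ(n+t+1) + t log Γ(n+t)
    have h := hcv (x := (n:ℝ) + t + 1) (by simp [mem_Ioi]; linarith)
      (y := (n:ℝ) + t) (by simp [mem_Ioi]; linarith) (by linarith : (0:ℝ) ≤ 1 - t) ht0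
      (by ring)
    have hpt : (1 - t) • ((n:ℝ) + t + 1) + t • ((n:ℝ) + t) = (n:ℝ) + 1 := by
      simp only [smul_eq_mul]; ring
    rw [hpt] at h
    have hG : Gamma ((n:ℝ) + t + 1) = ((n:ℝ) + t) * Gamma ((n:ℝ) + t) :=
      Real.Gamma_add_one (by positivity)
    have hGpos : 0 < Gamma ((n:ℝ) + t) := Real.Gamma_pos_of_pos (by linarith)
    have hfac : Real.log (Gamma ((n:ℝ)+1)) = Real.log (Nat.factorial n : ℝ) := by
      rw [Real.Gamma_nat_eq_factorial]
    simp only [Function.comp, smul_eq_mul] at h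
    have hGl : Real.log (Gamma ((n:ℝ) + t + 1)) =
        Real.log ((n:ℝ) + t) + Real.log (Gamma ((n:ℝ) + t)) := by
      rw [hG, Real.log_mul (by positivity) (ne_of_gt hGpos)]
    rw [hfac, hGl] at h
    rw [hGl]
    have hlog : Real.log ((n:ℝ)) ≤ Real.log ((n:ℝ) + t) :=
      Real.log_le_log h0n (by linarith)
    nlinarith [Real.log_nonneg hn1, mul_le_mul_of_nonneg_left hlog ht0]
  · have h := hcv (x := (n:ℝ) + 1) (by simp [mem_Ioi]; linarith)
      (y := (n:ℝ) + 2) (by simp [mem_Ioi]; linarith) (by linarith : (0:ℝ) ≤ 1 - t) ht0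
      (by ring)
    have hpt : (1 - t) • ((n:ℝ) + 1) + t • ((n:ℝ) + 2) = (n:ℝ) + t + 1 := by
      simp only [smul_eq_mul]; ring
    rw [hpt] at h
    simp only [Function.comp, smul_eq_mul] at h
    have h1 : Gamma ((n:ℝ) + 1) = (Nat.factorial n : ℝ) := Real.Gamma_nat_eq_factorial n
    have h2 : Gamma ((n:ℝ) + 2) = ((n:ℝ)+1) * (Nat.factorial n : ℝ) := by
      have : ((n:ℝ) + 2) = ((n:ℝ) + 1) + 1 := by ring
      rw [this, Real.Gamma_add_one (by positivity), h1]
    rw [h1, h2, Real.log_mul (by positivity) (by positivity)] at h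
    nlinarith

lemma ell_floor_bound {x : ℝ} (hx : 1 ≤ x) :
    ell (⌊x⌋₊ : ℝ) - 2/(⌊x⌋₊:ℝ) ≤ ell x ∧ ell x ≤ ell (⌊x⌋₊ : ℝ) + 2/(⌊x⌋₊:ℝ) := by
  obtain ⟨n, hn⟩ : ∃ n : ℕ, n = ⌊x⌋₊ := ⟨_, rfl⟩
  rw [← hn]
  have hx0 : (0:ℝ) < x := by linarith
  have hn1 : 1 ≤ n := hn ▸ Nat.le_floor (by exact_mod_cast hx)
  have hn1' : (1:ℝ) ≤ (n:ℝ) := by exact_mod_cast hn1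
  have h0n : (0:ℝ) < n := by linarith
  have hnx : (n:ℝ) ≤ x := by rw [hn]; exact Nat.floor_le (le_of_lt hx0)
  have hxn : x < (n:ℝ) + 1 := by rw [hn]; exact Nat.lt_floor_add_one x
  obtain ⟨t, htdef⟩ : ∃ t : ℝ, t = x - n := ⟨_, rfl⟩
  have ht0 : 0 ≤ t := by rw [htdef]; linarith
  have ht1 : t < 1 := by rw [htdef]; linarith
  have hxe : x = (n:ℝ) + t := by rw [htdef]; ring
  -- gautschi
  obtain ⟨hg1, hg2⟩ := gautschi_log hn1 ht0 ht1
  have hGl : Real.log (Nat.factorial n : ℝ) + t * Real.log n ≤ Real.log (Gamma (x + 1)) := by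
    rw [hxe]; exact hg1
  have hGu : Real.log (Gamma (x + 1)) ≤ Real.log (Nat.factorial n : ℝ) + t * Real.log ((n:ℝ)+1) := by
    rw [hxe]; exact hg2
  -- log bounds
  have hlub : Real.log x - Real.log n ≤ t / n := by
    rw [← Real.log_div (ne_of_gt hx0) (ne_of_gt h0n)]
    have := Real.log_le_sub_one_of_pos (show 0 < x / n by positivity)
    have hd : x / (n:ℝ) - 1 = t / n := by rw [htdef]; field_simp
    linarith
  have hllb : t / x ≤ Real.log x - Real.log n := by
    rw [← Real.log_div (ne_of_gt hx0) (ne_of_gt h0n)]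
    have h2 := Real.log_le_sub_one_of_pos (show 0 < (n:ℝ) / x by positivity)
    have hinv : Real.log ((n:ℝ) / x) = - Real.log (x / n) := by
      rw [← Real.log_inv]; congr 1; field_simp
    rw [hinv] at h2
    have hd : (n:ℝ) / x - 1 = - (t / x) := by field_simp; linarith
    linarith
  have hc_up : x * (Real.log x - Real.log n) ≤ t + 1/n := by
    have h1 : x * (Real.log x - Real.log n) ≤ x * (t / n) :=
      mul_le_mul_of_nonneg_left hlub (le_of_lt hx0)
    have h2 : x * (t / n) = t + t * t / n := by rw [hxe]; field_simp
    have h3 : t * t / (n:ℝ) ≤ 1 / (n:ℝ) := by gcongr; nlinarith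
    linarith
  have hc_lb : t ≤ x * (Real.log x - Real.log n) := by
    have h1 : x * (t / x) ≤ x * (Real.log x - Real.log n) :=
      mul_le_mul_of_nonneg_left hllb (le_of_lt hx0)
    rw [mul_div_cancel₀ _ (ne_of_gt hx0)] at h1
    exact h1
  have hd_lb : 0 ≤ Real.log x - Real.log n := by
    have := Real.log_le_log h0n hnx
    linarith
  have hd_ub : Real.log x - Real.log n ≤ 1 / n := by
    have : t / (n:ℝ) ≤ 1 / (n:ℝ) := by gcongr <;> linarith
    linarith [hlub]
  have he : t * Real.log ((n:ℝ)+1) - t * Real.log n ≤ 1/n := by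
    have h1 : Real.log ((n:ℝ)+1) - Real.log n ≤ 1/n := by
      rw [← Real.log_div (by positivity) (ne_of_gt h0n)]
      have := Real.log_le_sub_one_of_pos (show 0 < ((n:ℝ)+1) / n by positivity)
      have hd : ((n:ℝ)+1) / (n:ℝ) - 1 = 1 / n := by field_simp; ring
      linarith
    have h2 : Real.log n ≤ Real.log ((n:ℝ)+1) := Real.log_le_log h0n (by linarith)
    nlinarith
  -- sqrt term
  have hsq : Real.log (Real.sqrt (2*π*x)) - Real.log (Real.sqrt (2*π*(n:ℝ)))
      = (Real.log x - Real.log n) / 2 := by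
    rw [Real.log_sqrt (by positivity), Real.log_sqrt (by positivity),
      Real.log_mul (by positivity) (ne_of_gt hx0), Real.log_mul (by positivity) (ne_of_gt h0n)]
    ring
  -- expand ell x - ell n
  have hfacn : Real.log (Gamma ((n:ℝ)+1)) = Real.log (Nat.factorial n : ℝ) := by
    rw [Real.Gamma_nat_eq_factorial]
  have hkey : ell x - ell (n:ℝ) =
      (Real.log (Gamma (x+1)) - Real.log (Nat.factorial n : ℝ))
      - x * (Real.log x - Real.log n) - t * Real.log n + t
      - (Real.log x - Real.log n) / 2 := by
    unfold ell
    rw [hfacn, ← hsq, hxe]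
    ring
  constructor
  · have hninv : (0:ℝ) < 1 / n := by positivity
    have h1 : ell x - ell (n:ℝ) ≥ -(3/2) * (1/(n:ℝ)) := by linarith
    have h3 : (2:ℝ)/(n:ℝ) = 2 * (1/(n:ℝ)) := by ring
    linarith
  · have hninv : (0:ℝ) < 1 / n := by positivity
    have h1 : ell x - ell (n:ℝ) ≤ 1/(n:ℝ) := by linarith
    have h3 : (2:ℝ)/(n:ℝ) = 2 * (1/(n:ℝ)) := by ring
    linarith

lemma ell_tendsto : Tendsto ell atTop (nhds 0) := by
  have hfl : Tendsto (fun x : ℝ => ⌊x⌋₊) atTop atTop := tendsto_nat_floor_atTop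
  have hinv : Tendsto (fun n : ℕ => 2 / (n:ℝ)) atTop (nhds 0) :=
    tendsto_const_nhds.div_atTop tendsto_natCast_atTop_atTop
  have hlow : Tendsto (fun x : ℝ => ell (⌊x⌋₊:ℝ) - 2/(⌊x⌋₊:ℝ)) atTop (nhds 0) := by
    have := (ell_nat_tendsto.sub hinv).comp hfl
    simpa [Function.comp_def] using this
  have hhigh : Tendsto (fun x : ℝ => ell (⌊x⌋₊:ℝ) + 2/(⌊x⌋₊:ℝ)) atTop (nhds 0) := by
    have := (ell_nat_tendsto.add hinv).comp hfl
    simpa [Function.comp_def] using this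
  refine tendsto_of_tendsto_of_tendsto_of_le_of_le' hlow hhigh ?_ ?_
  · filter_upwards [eventually_ge_atTop 1] with x hx
    exact (ell_floor_bound hx).1
  · filter_upwards [eventually_ge_atTop 1] with x hx
    exact (ell_floor_bound hx).2

lemma gamma_ratio : Tendsto (fun x : ℝ =>
    Gamma (x+1) / (Real.sqrt (2*π*x) * (x/exp 1)^x)) atTop (nhds 1) := by
  have h : Tendsto (fun x : ℝ => Real.exp (ell x)) atTop (nhds 1) := by
    have := (Real.continuous_exp.tendsto 0).comp ell_tendsto
    simpa [Function.comp_def] using this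
  apply h.congr'
  filter_upwards [eventually_ge_atTop 1] with x hx
  have hx0 : (0:ℝ) < x := by linarith
  have hG : 0 < Gamma (x+1) := Real.Gamma_pos_of_pos (by linarith)
  have hD : 0 < Real.sqrt (2*π*x) * (x/exp 1)^x := by
    have : (0:ℝ) < (x/exp 1)^x := Real.rpow_pos_of_pos (by positivity) x
    positivity
  have hlogD : Real.log (Real.sqrt (2*π*x) * (x/exp 1)^x)
      = x * Real.log x - x + Real.log (Real.sqrt (2*π*x)) := by
    rw [Real.log_mul (by positivity) (ne_of_gt (Real.rpow_pos_of_pos (by positivity) x)),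
      Real.log_rpow (by positivity), Real.log_div (ne_of_gt hx0) (exp_ne_zero 1), Real.log_exp]
    ring
  show Real.exp (ell x) = _
  unfold ell
  rw [← hlogD, Real.exp_sub, Real.exp_log hG, Real.exp_log hD]

end StirlingAux

theorem stmt_5 :
    Tendsto (fun x : ℝ => Gamma (x + 1) /
      (Real.sqrt π * (x / exp 1) ^ x *
        (8 * x ^ 3 + 4 * x ^ 2 + x + 1/30) ^ ((1:ℝ)/6))) atTop (nhds 1) := by
  have hz : Tendsto (fun x : ℝ => x⁻¹) atTop (nhds 0) := tendsto_inv_atTop_zero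
  have hden : Tendsto (fun x : ℝ => 8 + 4*x⁻¹ + x⁻¹*x⁻¹ + (1/30)*(x⁻¹*x⁻¹*x⁻¹)) atTop
      (nhds (8 + 4*0 + 0*0 + (1/30)*(0*0*0))) :=
    ((tendsto_const_nhds.add (tendsto_const_nhds.mul hz)).add (hz.mul hz)).add
      (tendsto_const_nhds.mul ((hz.mul hz).mul hz))
  norm_num at hden
  have hbase : Tendsto (fun x : ℝ => 8*x^3/(8*x^3+4*x^2+x+1/30)) atTop (nhds 1) := by
    have h8 : Tendsto (fun x : ℝ => 8 / (8 + 4*x⁻¹ + x⁻¹*x⁻¹ + (1/30)*(x⁻¹*x⁻¹*x⁻¹))) atTop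
        (nhds (8/8)) := tendsto_const_nhds.div hden (by norm_num)
    norm_num at h8
    apply h8.congr'
    filter_upwards [eventually_ge_atTop 1] with x hx
    have hx0 : (0:ℝ) < x := by linarith
    have hP : (0:ℝ) < 8*x^3+4*x^2+x+1/30 := by positivity
    field_simp
  have hq : Tendsto (fun x : ℝ => (8*x^3/(8*x^3+4*x^2+x+1/30)) ^ ((1:ℝ)/6)) atTop (nhds 1) := by
    have := hbase.rpow_const (p := (1:ℝ)/6) (Or.inl one_ne_zero)
    simpa using this
  have hmain := gamma_ratio.mul hq
  rw [mul_one] at hmain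
  apply hmain.congr'
  filter_upwards [eventually_ge_atTop 1] with x hx
  have hx0 : (0:ℝ) < x := by linarith
  have hP : (0:ℝ) < 8*x^3+4*x^2+x+1/30 := by positivity
  have hsplit : Real.sqrt (2*π*x) = Real.sqrt π * Real.sqrt (2*x) := by
    rw [show 2*π*x = π*(2*x) by ring, Real.sqrt_mul pi_pos.le]
  have h8 : (8*x^3 : ℝ) ^ ((1:ℝ)/6) = Real.sqrt (2*x) := by
    rw [show (8*x^3 : ℝ) = (2*x)^(3:ℕ) by ring, ← Real.rpow_natCast (2*x) 3,
      ← Real.rpow_mul (by positivity)]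
    rw [Real.sqrt_eq_rpow]
    norm_num
  have hdiv : (8*x^3/(8*x^3+4*x^2+x+1/30) : ℝ) ^ ((1:ℝ)/6)
      = Real.sqrt (2*x) / (8*x^3+4*x^2+x+1/30) ^ ((1:ℝ)/6) := by
    rw [Real.div_rpow (by positivity) hP.le, h8]
  have hsx : Real.sqrt (2*x) ≠ 0 := by positivity
  have hspi : Real.sqrt π ≠ 0 := by positivity
  have hxe : (x/exp 1)^x ≠ 0 := (Real.rpow_pos_of_pos (by positivity) x).ne'
  have hP6 : (8*x^3+4*x^2+x+1/30 : ℝ) ^ ((1:ℝ)/6) ≠ 0 := (Real.rpow_pos_of_pos hP _).ne'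
  rw [hdiv, hsplit]
  field_simp
end

section
/- Nemes's formula is asymptotic to the Gamma function: lim_{x→∞} Γ(x+1) / (√(2πx)·(x/e)^x·(1 + 1/(12x² - 1/10))^x) = 1. -/
open Real Filter Topology

lemma xlogx_bounds {a b : ℝ} (ha : 0 < a) (hab : a ≤ b) :
    (b - a) * (log a + 1) ≤ b * log b - a * log a ∧
    b * log b - a * log a ≤ (b - a) * (log b + 1) := by
  have hb : 0 < b := lt_of_lt_of_le ha hab
  have h1' : a * (log b - log a) ≤ b - a := by
    have h1 : log b - log a ≤ (b - a) / a := by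
      rw [← Real.log_div hb.ne' ha.ne']
      calc log (b / a) ≤ b / a - 1 := Real.log_le_sub_one_of_pos (by positivity)
        _ = (b - a) / a := by field_simp
    calc a * (log b - log a) ≤ a * ((b - a) / a) := by
          exact mul_le_mul_of_nonneg_left h1 ha.le
      _ = b - a := by field_simp
  have h2' : b * (log a - log b) ≤ a - b := by
    have h2 : log a - log b ≤ (a - b) / b := by
      rw [← Real.log_div ha.ne' hb.ne']
      calc log (a / b) ≤ a / b - 1 := Real.log_le_sub_one_of_pos (by positivity)
        _ = (a - b) / b := by field_simp
    calc b * (log a - log b) ≤ b * ((a - b) / b) := by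
          exact mul_le_mul_of_nonneg_left h2 hb.le
      _ = a - b := by field_simp
  constructor <;> nlinarith [h1', h2']

noncomputable def F (x : ℝ) : ℝ := Real.sqrt (2 * π * x) * (x / exp 1) ^ x

lemma F_pos {x : ℝ} (hx : 0 < x) : 0 < F x := by
  have h : (0:ℝ) < 2 * π * x := by positivity
  have h2 : (0:ℝ) < x / exp 1 := by positivity
  exact mul_pos (Real.sqrt_pos.mpr h) (Real.rpow_pos_of_pos h2 x)

lemma logF {x : ℝ} (hx : 0 < x) :
    log (F x) = log (2 * π * x) / 2 + x * (log x - 1) := by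
  have h : (0:ℝ) < 2 * π * x := by positivity
  have h2 : (0:ℝ) < x / exp 1 := by positivity
  rw [F, Real.log_mul (Real.sqrt_pos.mpr h).ne' (Real.rpow_pos_of_pos h2 x).ne',
    Real.log_sqrt h.le, Real.log_rpow h2, Real.log_div hx.ne' (exp_pos 1).ne',
    Real.log_exp]

noncomputable def q (n : ℕ) : ℝ := log ((Nat.factorial n : ℝ) / F n)

lemma q_eq {n : ℕ} (hn : n ≠ 0) : q n = log (Nat.factorial n : ℝ) - log (F n) := by
  have h1 : (0:ℝ) < (Nat.factorial n : ℝ) := by exact_mod_cast Nat.factorial_pos n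
  have h2 : 0 < F n := F_pos (by exact_mod_cast Nat.pos_of_ne_zero hn)
  rw [q, Real.log_div h1.ne' h2.ne']

lemma q_tendsto : Tendsto q atTop (𝓝 0) := by
  have key : ∀ n : ℕ, n ≠ 0 → q n = log (Stirling.stirlingSeq n / Real.sqrt π) := by
    intro n hn
    have hn' : (0:ℝ) < n := by exact_mod_cast Nat.pos_of_ne_zero hn
    have hF : F n = Real.sqrt π * (Real.sqrt (2 * n) * ((n:ℝ) / exp 1) ^ (n:ℕ)) := by
      rw [F, ← Real.rpow_natCast ((n:ℝ) / exp 1) n]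
      have : (2 : ℝ) * π * n = π * (2 * n) := by ring
      rw [this, Real.sqrt_mul pi_pos.le, mul_assoc]
    rw [q, hF, Stirling.stirlingSeq]
    congr 1
    field_simp
  have h1 : Tendsto (fun n => Stirling.stirlingSeq n / Real.sqrt π) atTop (𝓝 1) := by
    have := Stirling.tendsto_stirlingSeq_sqrt_pi.div_const (Real.sqrt π)
    rwa [div_self (by positivity : Real.sqrt π ≠ 0)] at this
  have h2 : Tendsto (fun n => log (Stirling.stirlingSeq n / Real.sqrt π)) atTop (𝓝 0) := by
    have := (Real.continuousAt_log one_ne_zero).tendsto.comp h1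
    simpa [Function.comp_def] using this
  refine h2.congr' ?_
  filter_upwards [eventually_ne_atTop 0] with n hn
  exact (key n hn).symm

lemma lgamma_upper (n : ℕ) {t : ℝ} (h0 : 0 ≤ t) (h1 : t ≤ 1) :
    log (Gamma ((n:ℝ) + t + 1)) ≤ log (Nat.factorial n : ℝ) + t * log ((n:ℝ) + 1) := by
  have hmem1 : ((n:ℝ) + 1) ∈ Set.Ioi (0:ℝ) := by simp; positivity
  have hmem2 : ((n:ℝ) + 2) ∈ Set.Ioi (0:ℝ) := by simp; positivity
  have hc := Real.convexOn_log_Gamma.2 hmem1 hmem2 (by linarith : (0:ℝ) ≤ 1 - t) h0 (by ring)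
  have harg : (1 - t) • ((n:ℝ) + 1) + t • ((n:ℝ) + 2) = (n:ℝ) + t + 1 := by
    simp [smul_eq_mul]; ring
  rw [harg] at hc
  have hG1 : Gamma ((n:ℝ) + 1) = Nat.factorial n := Real.Gamma_nat_eq_factorial n
  have hG2 : Gamma ((n:ℝ) + 2) = ((n:ℝ) + 1) * Nat.factorial n := by
    have : ((n:ℝ) + 2) = ((n:ℝ) + 1) + 1 := by ring
    rw [this, Real.Gamma_add_one (by positivity), hG1]
  have hfacpos : (0:ℝ) < Nat.factorial n := by exact_mod_cast Nat.factorial_pos n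
  have hlog2 : log (Gamma ((n:ℝ) + 2)) = log ((n:ℝ) + 1) + log (Nat.factorial n : ℝ) := by
    rw [hG2, Real.log_mul (by positivity) hfacpos.ne']
  simp only [Function.comp, smul_eq_mul] at hc
  rw [hG1, hlog2] at hc
  nlinarith [hc]

lemma lgamma_lower (n : ℕ) {t : ℝ} (h0 : 0 ≤ t) (h1 : t ≤ 1) :
    log (Nat.factorial (n+1) : ℝ) - (1 - t) * log ((n:ℝ) + t + 1)
      ≤ log (Gamma ((n:ℝ) + t + 1)) := by
  have hx1 : (0:ℝ) < (n:ℝ) + t + 1 := by positivity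
  have hmem1 : ((n:ℝ) + t + 1) ∈ Set.Ioi (0:ℝ) := hx1
  have hmem2 : ((n:ℝ) + t + 2) ∈ Set.Ioi (0:ℝ) := by simp; positivity
  have hc := Real.convexOn_log_Gamma.2 hmem1 hmem2 h0 (by linarith : (0:ℝ) ≤ 1 - t) (by ring)
  have harg : t • ((n:ℝ) + t + 1) + (1 - t) • ((n:ℝ) + t + 2) = (n:ℝ) + 2 := by
    simp [smul_eq_mul]; ring
  rw [harg] at hc
  have hGpos : 0 < Gamma ((n:ℝ) + t + 1) := Real.Gamma_pos_of_pos hx1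
  have hG2 : Gamma ((n:ℝ) + t + 2) = ((n:ℝ) + t + 1) * Gamma ((n:ℝ) + t + 1) := by
    have : ((n:ℝ) + t + 2) = ((n:ℝ) + t + 1) + 1 := by ring
    rw [this, Real.Gamma_add_one hx1.ne']
  have hGn2 : Gamma ((n:ℝ) + 2) = (Nat.factorial (n+1) : ℝ) := by
    have : ((n:ℝ) + 2) = ((n+1:ℕ):ℝ) + 1 := by push_cast; ring
    rw [this, Real.Gamma_nat_eq_factorial]
  simp only [Function.comp, smul_eq_mul] at hc
  rw [hGn2, hG2, Real.log_mul hx1.ne' hGpos.ne'] at hc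
  nlinarith [hc]

lemma upper_bound {x : ℝ} (hx : 2 ≤ x) :
    log (Gamma (x + 1)) - log (F x)
      ≤ q ⌊x⌋₊ + log (1 + 1 / (⌊x⌋₊ : ℝ)) := by
  set n := ⌊x⌋₊ with hn
  have hn1 : 1 ≤ n := Nat.le_floor (by exact_mod_cast (by linarith : (1:ℝ) ≤ x))
  have hnx : (n:ℝ) ≤ x := Nat.floor_le (by linarith)
  have hxn : x < (n:ℝ) + 1 := Nat.lt_floor_add_one x
  have hnpos : (0:ℝ) < n := by exact_mod_cast hn1
  have hxpos : (0:ℝ) < x := by linarith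
  set t := x - (n:ℝ) with ht
  have h0 : 0 ≤ t := by simp [ht]; linarith
  have h1 : t ≤ 1 := by simp [ht]; linarith
  have hxe : x + 1 = (n:ℝ) + t + 1 := by ring
  have hup := lgamma_upper n h0 h1
  rw [← hxe] at hup
  -- log(1+1/n) = log(n+1) - log n
  have hlogn : log (1 + 1 / (n:ℝ)) = log ((n:ℝ)+1) - log n := by
    rw [← Real.log_div (by positivity) hnpos.ne']
    congr 1
    field_simp
  -- expand log F
  have hFn := logF hnpos
  have hFx := logF hxpos
  have hsplitn : log (2 * π * (n:ℝ)) = log (2*π) + log n :=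
    Real.log_mul (by positivity) hnpos.ne'
  have hsplitx : log (2 * π * x) = log (2*π) + log x :=
    Real.log_mul (by positivity) hxpos.ne'
  -- x log x - n log n ≥ t (log n + 1)
  have hxl := (xlogx_bounds hnpos hnx).1
  have hlmono : log (n:ℝ) ≤ log x := Real.log_le_log hnpos hnx
  have hlmono2 : log x ≤ log ((n:ℝ)+1) := Real.log_le_log hxpos (by linarith)
  have hqn : q n = log (Nat.factorial n : ℝ) - log (F n) :=
    q_eq (by omega)
  have htmul : t * (log ((n:ℝ)+1) - log n) ≤ 1 * (log ((n:ℝ)+1) - log n) :=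
    mul_le_mul_of_nonneg_right h1 (by linarith)
  rw [hqn, hlogn]
  rw [ht] at hup htmul
  linarith [hup, hxl, htmul, hFn, hFx, hsplitn, hsplitx, hlmono]

lemma lower_bound {x : ℝ} (hx : 2 ≤ x) :
    q (⌊x⌋₊ + 1) - log (1 + 1 / (⌊x⌋₊ : ℝ))
      ≤ log (Gamma (x + 1)) - log (F x) := by
  set n := ⌊x⌋₊ with hn
  have hn1 : 1 ≤ n := Nat.le_floor (by exact_mod_cast (by linarith : (1:ℝ) ≤ x))
  have hnx : (n:ℝ) ≤ x := Nat.floor_le (by linarith)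
  have hxn : x < (n:ℝ) + 1 := Nat.lt_floor_add_one x
  have hnpos : (0:ℝ) < n := by exact_mod_cast hn1
  have hxpos : (0:ℝ) < x := by linarith
  set t := x - (n:ℝ) with ht
  have h0 : 0 ≤ t := by simp [ht]; linarith
  have h1 : t ≤ 1 := by simp [ht]; linarith
  have hxe : x + 1 = (n:ℝ) + t + 1 := by ring
  have hlo := lgamma_lower n h0 h1
  rw [← hxe] at hlo
  have hlogn : log (1 + 1 / (n:ℝ)) = log ((n:ℝ)+1) - log n := by
    rw [← Real.log_div (by positivity) hnpos.ne']
    congr 1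
    field_simp
  have hFn1 := logF (by positivity : (0:ℝ) < (n:ℝ)+1)
  have hFx := logF hxpos
  have hsplitn : log (2 * π * ((n:ℝ)+1)) = log (2*π) + log ((n:ℝ)+1) :=
    Real.log_mul (by positivity) (by positivity)
  have hsplitx : log (2 * π * x) = log (2*π) + log x :=
    Real.log_mul (by positivity) hxpos.ne'
  -- (n+1) log (n+1) - x log x ≥ (n+1-x)(log x + 1)
  have hxl := (xlogx_bounds hxpos (by linarith : x ≤ (n:ℝ)+1)).1
  have hlmono : log (n:ℝ) ≤ log x := Real.log_le_log hnpos hnx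
  have hlmono2 : log x ≤ log ((n:ℝ)+1) := Real.log_le_log hxpos (by linarith)
  -- log(x+1) - log x ≤ log(n+1) - log n
  have hll : log (x+1) - log x ≤ log ((n:ℝ)+1) - log (n:ℝ) := by
    rw [← Real.log_div (by positivity) hxpos.ne', ← Real.log_div (by positivity) hnpos.ne']
    apply Real.log_le_log (by positivity)
    rw [div_le_div_iff₀ hxpos hnpos]
    nlinarith
  -- log x ≤ log (x+1)
  have hlx : log x ≤ log (x+1) := Real.log_le_log hxpos (by linarith)
  have hqn : q (n+1) = log (Nat.factorial (n+1) : ℝ) - log (F ((n:ℝ)+1)) := by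
    exact_mod_cast q_eq (Nat.succ_ne_zero n)
  have hcast : ((n+1:ℕ):ℝ) = (n:ℝ)+1 := by push_cast; ring
  have hsmul : (1-t) * (log x - log (x+1)) ≥ 1 * (log x - log (x+1)) := by
    nlinarith [hlx]
  rw [hqn, hlogn]
  rw [ht] at hlo hsmul
  linarith [hlo, hxl, hsmul, hll, hFn1, hFx, hsplitn, hsplitx, hlmono2]

lemma g_tendsto : Tendsto (fun x : ℝ => log (Gamma (x + 1)) - log (F x)) atTop (𝓝 0) := by
  have hfloor : Tendsto (fun x : ℝ => ⌊x⌋₊) atTop atTop := tendsto_nat_floor_atTop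
  have hq1 : Tendsto (fun x : ℝ => q ⌊x⌋₊) atTop (𝓝 0) := q_tendsto.comp hfloor
  have hq2 : Tendsto (fun x : ℝ => q (⌊x⌋₊ + 1)) atTop (𝓝 0) :=
    (q_tendsto.comp (tendsto_add_atTop_nat 1)).comp hfloor
  have hcn : Tendsto (fun n : ℕ => log (1 + 1 / (n:ℝ))) atTop (𝓝 0) := by
    have h1 : Tendsto (fun n : ℕ => 1 + 1 / (n:ℝ)) atTop (𝓝 1) := by
      have : Tendsto (fun n : ℕ => 1 / (n:ℝ)) atTop (𝓝 0) := tendsto_one_div_atTop_nhds_zero_nat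
      simpa using tendsto_const_nhds.add this
    have := (Real.continuousAt_log one_ne_zero).tendsto.comp h1
    simpa [Function.comp_def] using this
  have hc : Tendsto (fun x : ℝ => log (1 + 1 / (⌊x⌋₊ : ℝ))) atTop (𝓝 0) := hcn.comp hfloor
  have hlow : Tendsto (fun x : ℝ => q (⌊x⌋₊ + 1) - log (1 + 1 / (⌊x⌋₊ : ℝ))) atTop (𝓝 0) := by
    simpa using hq2.sub hc
  have hupp : Tendsto (fun x : ℝ => q ⌊x⌋₊ + log (1 + 1 / (⌊x⌋₊ : ℝ))) atTop (𝓝 0) := by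
    simpa using hq1.add hc
  refine tendsto_of_tendsto_of_tendsto_of_le_of_le' hlow hupp ?_ ?_
  · filter_upwards [eventually_ge_atTop (2:ℝ)] with x hx
    exact lower_bound hx
  · filter_upwards [eventually_ge_atTop (2:ℝ)] with x hx
    exact upper_bound hx

lemma nemes_log_tendsto :
    Tendsto (fun x : ℝ => x * log (1 + 1 / (12 * x ^ 2 - 1/10))) atTop (𝓝 0) := by
  have hupp : Tendsto (fun x : ℝ => 1 / (11 * x)) atTop (𝓝 0) := by
    simp only [one_div]
    exact Tendsto.comp tendsto_inv_atTop_zero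
      (Tendsto.const_mul_atTop (by norm_num) tendsto_id)
  refine tendsto_of_tendsto_of_tendsto_of_le_of_le' tendsto_const_nhds hupp ?_ ?_
  · filter_upwards [eventually_ge_atTop (1:ℝ)] with x hx
    have hden : (0:ℝ) < 12 * x ^ 2 - 1/10 := by nlinarith
    have hu : 0 ≤ 1 / (12 * x ^ 2 - 1/10) := by positivity
    exact mul_nonneg (by linarith) (Real.log_nonneg (by linarith))
  · filter_upwards [eventually_ge_atTop (1:ℝ)] with x hx
    have hden : (0:ℝ) < 12 * x ^ 2 - 1/10 := by nlinarith
    set u := 1 / (12 * x ^ 2 - 1/10) with hu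
    have hupos : 0 < u := by positivity
    have hlog : log (1 + u) ≤ u := by
      have := Real.log_le_sub_one_of_pos (by linarith : (0:ℝ) < 1 + u)
      linarith
    calc x * log (1 + u) ≤ x * u := mul_le_mul_of_nonneg_left hlog (by linarith)
      _ = x / (12 * x ^ 2 - 1/10) := by rw [hu]; ring
      _ ≤ 1 / (11 * x) := by
          rw [div_le_div_iff₀ (by linarith) (by positivity)]
          nlinarith

theorem stmt_6 :
    Tendsto (fun x : ℝ => Gamma (x + 1) /
      (Real.sqrt (2 * π * x) * (x / exp 1) ^ x *
        (1 + 1 / (12 * x ^ 2 - 1/10)) ^ x)) atTop (nhds 1) := by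
  have hmain : Tendsto (fun x : ℝ =>
      exp ((log (Gamma (x + 1)) - log (F x)) - x * log (1 + 1 / (12 * x ^ 2 - 1/10))))
      atTop (𝓝 1) := by
    have h := g_tendsto.sub nemes_log_tendsto
    rw [sub_zero] at h
    have := (Real.continuous_exp.tendsto 0).comp h
    simpa [Function.comp_def] using this
  refine hmain.congr' ?_
  filter_upwards [eventually_ge_atTop (2:ℝ)] with x hx
  have hxpos : (0:ℝ) < x := by linarith
  have hden : (0:ℝ) < 12 * x ^ 2 - 1/10 := by nlinarith
  have hu : (0:ℝ) < 1 + 1 / (12 * x ^ 2 - 1/10) := by positivity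
  have hG : 0 < Gamma (x + 1) := Real.Gamma_pos_of_pos (by linarith)
  have hF : 0 < F x := F_pos hxpos
  have hN : 0 < (1 + 1 / (12 * x ^ 2 - 1/10)) ^ x := Real.rpow_pos_of_pos hu x
  rw [sub_sub, ← Real.log_rpow hu x, ← Real.log_mul hF.ne' hN.ne',
    Real.exp_sub, Real.exp_log hG, Real.exp_log (by positivity)]
  rfl
end

section
/- Windschitl's formula is asymptotic to the Gamma function: lim_{x→∞} Γ(x+1) / (√(2πx)·(x/e)^x·(x·sinh(1/x))^(x/2)) = 1. -/
open Real Filter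

lemma aux_sinh {y : ℝ} (h0 : 0 < y) (h1 : y ≤ 1) : Real.sinh y ≤ y + y ^ 3 := by
  have hb1 := Real.exp_bound (x := y) (by rw [abs_of_pos h0]; exact h1) (n := 3) (by norm_num)
  have hb2 := Real.exp_bound (x := -y) (by rw [abs_neg, abs_of_pos h0]; exact h1) (by norm_num : (0:ℕ) < 3)
  rw [abs_of_pos h0] at hb1
  rw [abs_neg, abs_of_pos h0] at hb2
  simp [Finset.sum_range_succ, Nat.factorial] at hb1 hb2
  rw [Real.sinh_eq]
  have h1' := abs_le.1 hb1
  have h2' := abs_le.1 hb2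
  nlinarith [h1'.1, h1'.2, h2'.1, h2'.2, pow_pos h0 3]

lemma aux_M : Tendsto (fun x : ℝ => x / 2 * Real.log (x * Real.sinh (1 / x))) atTop (nhds 0) := by
  have hup : Tendsto (fun x : ℝ => 1 / (2 * x)) atTop (nhds 0) := by
    apply Tendsto.div_atTop tendsto_const_nhds
    exact (tendsto_id.const_mul_atTop two_pos)
  refine tendsto_of_tendsto_of_tendsto_of_le_of_le' tendsto_const_nhds hup ?_ ?_
  · filter_upwards [eventually_ge_atTop (1:ℝ)] with x hx
    have hx0 : 0 < x := lt_of_lt_of_le one_pos hx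
    have hxi : 0 < 1 / x := by positivity
    have h1 : (1:ℝ) ≤ x * Real.sinh (1/x) := by
      have := Real.self_lt_sinh_iff.2 hxi
      calc (1:ℝ) = x * (1/x) := by field_simp
        _ ≤ x * Real.sinh (1/x) := by nlinarith
    have hlog : 0 ≤ Real.log (x * Real.sinh (1/x)) := Real.log_nonneg h1
    positivity
  · filter_upwards [eventually_ge_atTop (1:ℝ)] with x hx
    have hx0 : 0 < x := lt_of_lt_of_le one_pos hx
    have hxi : 0 < 1 / x := by positivity
    have hs := aux_sinh hxi (by rw [div_le_one hx0]; linarith)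
    have h2 : x * Real.sinh (1/x) ≤ 1 + 1 / x ^ 2 := by
      have : x * (1/x + (1/x)^3) = 1 + 1/x^2 := by field_simp
      nlinarith
    have h1 : (0:ℝ) < x * Real.sinh (1/x) := by
      have := Real.self_lt_sinh_iff.2 hxi
      positivity
    have hlog : Real.log (x * Real.sinh (1/x)) ≤ 1 / x ^ 2 := by
      calc Real.log (x * Real.sinh (1/x)) ≤ x * Real.sinh (1/x) - 1 := Real.log_le_sub_one_of_pos h1
        _ ≤ 1 / x ^ 2 := by linarith
    calc x / 2 * Real.log (x * Real.sinh (1/x)) ≤ x / 2 * (1 / x^2) := by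
          apply mul_le_mul_of_nonneg_left hlog (by positivity)
      _ = 1 / (2 * x) := by field_simp


lemma aux_sandwich {x : ℝ} (hx : 2 ≤ x) :
    (x - ⌊x⌋₊) * Real.log ⌊x⌋₊ + Real.log (Nat.factorial ⌊x⌋₊ : ℝ) ≤ Real.log (Real.Gamma (x + 1)) ∧
    Real.log (Real.Gamma (x + 1)) ≤ (x - ⌊x⌋₊) * Real.log (⌊x⌋₊ + 1) + Real.log (Nat.factorial ⌊x⌋₊ : ℝ) := by
  set n := ⌊x⌋₊ with hn
  have hx0 : (0:ℝ) < x := by linarith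
  have hn2 : 2 ≤ n := Nat.le_floor (by exact_mod_cast hx)
  have hnx : (n:ℝ) ≤ x := Nat.floor_le hx0.le
  have hxn1 : x < n + 1 := Nat.lt_floor_add_one x
  have hnpos : (0:ℝ) < n := by exact_mod_cast Nat.lt_of_lt_of_le Nat.zero_lt_two hn2
  have hf := Real.convexOn_log_Gamma
  have hfact : Real.log (Real.Gamma ((n:ℝ) + 1)) = Real.log (Nat.factorial n : ℝ) := by
    rw [Real.Gamma_nat_eq_factorial]
  have hfact2 : Real.log (Real.Gamma ((n:ℝ) + 2)) = Real.log ((n:ℝ) + 1) + Real.log (Nat.factorial n : ℝ) := by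
    have : ((n:ℝ) + 2) = ((n + 1 : ℕ) : ℝ) + 1 := by push_cast; ring
    rw [this, Real.Gamma_nat_eq_factorial, Nat.factorial_succ]
    push_cast
    rw [Real.log_mul (by positivity) (by positivity : ((Nat.factorial n : ℝ)) ≠ 0)]
  constructor
  · -- lower bound
    rcases eq_or_lt_of_le hnx with heq | hlt
    · rw [← heq]
      simp [hfact.symm]
    · have hmem1 : (n:ℝ) ∈ Set.Ioi (0:ℝ) := hnpos
      have hmem3 : x + 1 ∈ Set.Ioi (0:ℝ) := by simp; linarith
      have hs := hf.slope_mono_adjacent hmem1 hmem3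
        (by exact_mod_cast lt_add_one (n:ℝ) : (n:ℝ) < (n:ℝ)+1) (by linarith : (n:ℝ)+1 < x+1)
      have hgam : Real.Gamma ((n:ℝ) + 1) = n * Real.Gamma n := Real.Gamma_add_one (ne_of_gt hnpos)
      have hGpos : 0 < Real.Gamma (n:ℝ) := Real.Gamma_pos_of_pos hnpos
      have hslope1 : ((Real.log ∘ Real.Gamma) ((n:ℝ)+1) - (Real.log ∘ Real.Gamma) n) / ((n:ℝ)+1 - n) = Real.log n := by
        simp only [Function.comp_apply, hgam]
        rw [Real.log_mul (ne_of_gt hnpos) (ne_of_gt hGpos)]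
        field_simp
        ring
      rw [hslope1] at hs
      simp only [Function.comp_apply] at hs
      rw [hfact] at hs
      have ht : 0 < x - n := by linarith
      have : (x + 1 - ((n:ℝ)+1)) = x - n := by ring
      rw [this] at hs
      have := (le_div_iff₀ ht).1 hs
      linarith
  · -- upper bound
    set t := x - n with hts
    have ht0 : 0 ≤ t := by linarith
    have ht1 : t < 1 := by simp [hts]; linarith
    have hmem1 : ((n:ℝ)+1) ∈ Set.Ioi (0:ℝ) := by simp; linarith
    have hmem2 : ((n:ℝ)+2) ∈ Set.Ioi (0:ℝ) := by simp; linarith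
    have hcomb := hf.2 hmem1 hmem2 (by linarith : (0:ℝ) ≤ 1 - t) ht0 (by ring)
    have harg : (1 - t) • ((n:ℝ)+1) + t • ((n:ℝ)+2) = x + 1 := by
      simp only [smul_eq_mul]; ring
    rw [harg] at hcomb
    simp only [Function.comp_apply, smul_eq_mul] at hcomb
    rw [hfact, hfact2] at hcomb
    nlinarith [hcomb]

set_option maxHeartbeats 2000000 in
lemma aux_L : Tendsto (fun x : ℝ => Real.log (Real.Gamma (x + 1)) - x * Real.log x + x
    - (1/2) * Real.log (2 * π * x)) atTop (nhds 0) := by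
  have hs : Tendsto (fun x : ℝ => Real.log (Stirling.stirlingSeq ⌊x⌋₊) - (1/2) * Real.log π)
      atTop (nhds 0) := by
    have h1 : Tendsto (fun x : ℝ => Stirling.stirlingSeq ⌊x⌋₊) atTop (nhds (Real.sqrt π)) :=
      Stirling.tendsto_stirlingSeq_sqrt_pi.comp tendsto_nat_floor_atTop
    have h2 : Tendsto (fun x : ℝ => Real.log (Stirling.stirlingSeq ⌊x⌋₊)) atTop
        (nhds (Real.log (Real.sqrt π))) :=
      ((Real.continuousAt_log (by positivity)).tendsto).comp h1
    rw [Real.log_sqrt Real.pi_pos.le] at h2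
    have h3 := h2.sub (tendsto_const_nhds (x := (1/2) * Real.log π))
    convert h3 using 2
    ring
  have hd : Tendsto (fun x : ℝ => (Real.log (Real.Gamma (x + 1)) - x * Real.log x + x
      - (1/2) * Real.log (2 * π * x)) - (Real.log (Stirling.stirlingSeq ⌊x⌋₊) - (1/2) * Real.log π))
      atTop (nhds 0) := by
    have hup : Tendsto (fun x : ℝ => 4 / x) atTop (nhds 0) :=
      Tendsto.div_atTop tendsto_const_nhds tendsto_id
    have hlo : Tendsto (fun x : ℝ => -(4 / x)) atTop (nhds 0) := by
      simpa using hup.neg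
    refine tendsto_of_tendsto_of_tendsto_of_le_of_le' hlo hup ?_ ?_
    all_goals {
      filter_upwards [eventually_ge_atTop (2:ℝ)] with x hx
      set n := ⌊x⌋₊ with hn
      have hx0 : (0:ℝ) < x := by linarith
      have hn2 : 2 ≤ n := Nat.le_floor (by exact_mod_cast hx)
      have hnx : (n:ℝ) ≤ x := Nat.floor_le hx0.le
      have hxn1 : x < n + 1 := Nat.lt_floor_add_one x
      have hnpos : (0:ℝ) < n := by exact_mod_cast Nat.lt_of_lt_of_le Nat.zero_lt_two hn2
      have hnR2 : (2:ℝ) ≤ n := by exact_mod_cast hn2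
      have hx2n : x < 2 * n := by linarith
      set t := x - n with htdef
      have ht0 : 0 ≤ t := by simp [htdef]; linarith
      have ht1 : t < 1 := by simp [htdef]; linarith
      -- factorial decomposition
      have hdenpos : 0 < Real.sqrt (2 * n) * ((n : ℝ) / Real.exp 1) ^ n := by positivity
      have hfac : (Nat.factorial n : ℝ) = Stirling.stirlingSeq n *
          (Real.sqrt (2 * n) * ((n : ℝ) / Real.exp 1) ^ n) := by
        rw [Stirling.stirlingSeq]; field_simp
      have hstpos : 0 < Stirling.stirlingSeq n := by
        have : (0:ℝ) < Nat.factorial n := by exact_mod_cast Nat.factorial_pos n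
        rw [Stirling.stirlingSeq]; positivity
      have hfa' : Real.log (Stirling.stirlingSeq n) = Real.log (Nat.factorial n : ℝ)
          - (1/2) * (Real.log 2 + Real.log n) - n * (Real.log n - 1) := by
        rw [hfac, Real.log_mul hstpos.ne' hdenpos.ne',
          Real.log_mul (by positivity) (by positivity),
          Real.log_sqrt (by positivity), Real.log_pow,
          Real.log_mul two_ne_zero hnpos.ne', Real.log_div hnpos.ne' (Real.exp_ne_zero 1),
          Real.log_exp]
        push_cast
        ring
      have hlog2πx : Real.log (2 * π * x) = Real.log 2 + Real.log π + Real.log x := by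
        rw [Real.log_mul (by positivity) hx0.ne', Real.log_mul two_ne_zero Real.pi_ne_zero]
      -- bounds on B = log x - log n
      have hBub : Real.log x - Real.log n ≤ t / n := by
        have h := Real.log_le_sub_one_of_pos (show (0:ℝ) < x / n by positivity)
        rw [Real.log_div hx0.ne' hnpos.ne'] at h
        have : x / n - 1 = t / n := by field_simp; linarith
        linarith
      have hBlb : t / x ≤ Real.log x - Real.log n := by
        have h := Real.log_le_sub_one_of_pos (show (0:ℝ) < (n:ℝ) / x by positivity)
        rw [Real.log_div hnpos.ne' hx0.ne'] at h
        have : (n:ℝ) / x - 1 = -(t / x) := by field_simp; ring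
        linarith
      -- bound on C = log (n+1) - log n
      have hCub : Real.log ((n:ℝ) + 1) - Real.log n ≤ 1 / n := by
        have h := Real.log_le_sub_one_of_pos (show (0:ℝ) < ((n:ℝ)+1) / n by positivity)
        rw [Real.log_div (by positivity) hnpos.ne'] at h
        have : ((n:ℝ)+1) / n - 1 = 1 / n := by field_simp; ring
        linarith
      have hClb : 0 ≤ Real.log ((n:ℝ) + 1) - Real.log n := by
        have := Real.log_le_log hnpos (by linarith : (n:ℝ) ≤ (n:ℝ) + 1)
        linarith
      obtain ⟨hglb, hgub⟩ := aux_sandwich hx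
      rw [← hn, ← htdef] at hglb hgub
      clear_value t n
      -- identity
      have hid : Real.log (Real.Gamma (x + 1)) - x * Real.log x + x
          - (1/2) * Real.log (2 * π * x)
          - (Real.log (Stirling.stirlingSeq n) - (1/2) * Real.log π)
          = (Real.log (Real.Gamma (x + 1)) - Real.log (Nat.factorial n : ℝ) - t * Real.log n)
            - (x + 1/2) * (Real.log x - Real.log n) + t := by
        rw [hfa', hlog2πx, htdef]
        ring
      -- G bounds
      have hG1 : 0 ≤ Real.log (Real.Gamma (x + 1)) - Real.log (Nat.factorial n : ℝ) - t * Real.log n := by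
        linarith
      have hG2 : Real.log (Real.Gamma (x + 1)) - Real.log (Nat.factorial n : ℝ) - t * Real.log n
          ≤ 1 / n := by
        have h1 : t * (Real.log ((n:ℝ)+1) - Real.log n)
            ≤ 1 * (Real.log ((n:ℝ)+1) - Real.log n) :=
          mul_le_mul_of_nonneg_right ht1.le hClb
        nlinarith [hCub, h1, hgub]
      rw [hid]
      have hn1x : 1 / (n:ℝ) ≤ 4 / x := by
        rw [div_le_div_iff₀ hnpos hx0]; linarith
      have hB1 : (x + 1/2) * (Real.log x - Real.log n) ≤ (x + 1/2) * (t / n) :=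
        mul_le_mul_of_nonneg_left hBub (by linarith)
      have hB2 : (x + 1/2) * (t / x) ≤ (x + 1/2) * (Real.log x - Real.log n) :=
        mul_le_mul_of_nonneg_left hBlb (by linarith)
      have key1 : (x + 1/2) * (t / n) - t ≤ 4 / x := by
        have e : (x + 1/2) * (t / n) - t = t * (t + 1/2) / n := by
          rw [htdef]; field_simp; ring
        have e2 : t * (t + 1/2) ≤ 3/2 := by nlinarith
        have e3 : t * (t + 1/2) / n ≤ 4 / x := by
          rw [div_le_div_iff₀ hnpos hx0]
          nlinarith [mul_le_mul_of_nonneg_right e2 hx0.le, hx2n]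
        linarith
      have key2 : t ≤ (x + 1/2) * (t / x) := by
        have e : (x + 1/2) * (t / x) = t + t / (2 * x) := by field_simp
        have : 0 ≤ t / (2 * x) := by positivity
        linarith
      linarith [hG1, hG2, hB1, hB2, key1, key2, hn1x, div_pos (by norm_num : (0:ℝ)<2) hx0]
    }
  have := hd.add hs
  simpa using this

theorem stmt_7 :
    Tendsto (fun x : ℝ => Gamma (x + 1) /
      (Real.sqrt (2 * π * x) * (x / exp 1) ^ x *
        (x * Real.sinh (1 / x)) ^ (x / 2))) atTop (nhds 1) := by
  have hLM := aux_L.sub aux_M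
  rw [sub_zero] at hLM
  have hexp : Tendsto (fun x : ℝ => Real.exp ((Real.log (Real.Gamma (x + 1)) - x * Real.log x + x
      - (1/2) * Real.log (2 * π * x)) - x / 2 * Real.log (x * Real.sinh (1 / x))))
      atTop (nhds 1) := by
    have := (Real.continuous_exp.continuousAt (x := (0:ℝ))).tendsto.comp hLM
    rw [Real.exp_zero] at this
    exact this
  refine Filter.Tendsto.congr' ?_ hexp
  filter_upwards [eventually_ge_atTop (1:ℝ)] with x hx
  have hx0 : (0:ℝ) < x := by linarith
  have hG : 0 < Real.Gamma (x + 1) := Real.Gamma_pos_of_pos (by linarith)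
  have hsh : 0 < x * Real.sinh (1 / x) := by
    have h1x : 0 < 1 / x := by positivity
    have := Real.self_lt_sinh_iff.2 h1x
    positivity
  have h1 : Real.sqrt (2 * π * x) = Real.exp ((1/2) * Real.log (2 * π * x)) := by
    rw [show (1/2) * Real.log (2 * π * x) = Real.log (Real.sqrt (2 * π * x)) by
      rw [Real.log_sqrt (by positivity)]; ring]
    rw [Real.exp_log (Real.sqrt_pos.2 (by positivity))]
  have h2 : (x / Real.exp 1) ^ x = Real.exp (x * (Real.log x - 1)) := by
    rw [Real.rpow_def_of_pos (by positivity), Real.log_div hx0.ne' (Real.exp_ne_zero 1),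
      Real.log_exp]
    ring_nf
  have h3 : (x * Real.sinh (1 / x)) ^ (x / 2)
      = Real.exp (x / 2 * Real.log (x * Real.sinh (1 / x))) := by
    rw [Real.rpow_def_of_pos hsh]
    ring_nf
  rw [h1, h2, h3]
  rw [eq_div_iff (by positivity)]
  rw [← Real.exp_add, ← Real.exp_add, ← Real.exp_add, ← Real.exp_log hG, Real.exp_eq_exp,
    Real.log_exp]
  ring
end

section
/- The Hirschhorn–Villarino formula is asymptotic to the Gamma function: lim_{x→∞} Γ(x+1) / (√π·(x/e)^x·(8x³ + 4x² + x + (1 - 11/(8x) + 79/(112x²))/30)^(1/6)) = 1. -/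
open Real Filter

section StirlingAux
open Set

noncomputable def dd (n : ℕ) : ℝ :=
  Real.log n.factorial - ((n:ℝ) * Real.log n - n + Real.log (2 * π * n) / 2)

noncomputable def LL (x : ℝ) : ℝ :=
  Real.log (Real.Gamma (x + 1)) - (x * Real.log x - x + Real.log (2 * π * x) / 2)

lemma tendsto_dd : Tendsto dd atTop (nhds 0) := by
  have h1 : Tendsto (fun n => Real.log (Stirling.stirlingSeq n) - Real.log (Real.sqrt π))
      atTop (nhds 0) := by
    have h2 : Tendsto (fun n => Real.log (Stirling.stirlingSeq n)) atTop
        (nhds (Real.log (Real.sqrt π))) :=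
      (Real.continuousAt_log (by positivity)).tendsto.comp
        Stirling.tendsto_stirlingSeq_sqrt_pi
    simpa using h2.sub (tendsto_const_nhds (x := Real.log (Real.sqrt π)))
  refine h1.congr' ?_
  filter_upwards [eventually_ge_atTop 1] with n hn
  have hn0 : (0:ℝ) < n := by exact_mod_cast hn
  rw [Stirling.log_stirlingSeq_formula, dd]
  rw [Real.log_div (by positivity) (exp_ne_zero 1), Real.log_exp,
    Real.log_mul (by norm_num) hn0.ne', Real.log_mul (by positivity) hn0.ne',
    Real.log_mul (by norm_num) pi_pos.ne', Real.sqrt_eq_rpow, Real.log_rpow pi_pos]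
  ring


lemma logGamma_upper (n : ℕ) (hn : 1 ≤ n) {s : ℝ} (hs0 : 0 ≤ s) (hs1 : s ≤ 1) :
    Real.log (Real.Gamma ((n:ℝ) + s)) ≤
      Real.log n.factorial - (1 - s) * Real.log n := by
  have hn0 : (0:ℝ) < n := by exact_mod_cast hn
  have hc := Real.convexOn_log_Gamma.2 (mem_Ioi.2 hn0) (mem_Ioi.2 (by linarith : (0:ℝ) < n + 1))
    (by linarith : (0:ℝ) ≤ 1 - s) hs0 (by ring)
  simp only [smul_eq_mul, Function.comp_apply] at hc
  have hx : (1 - s) * (n:ℝ) + s * ((n:ℝ) + 1) = (n:ℝ) + s := by ring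
  rw [hx] at hc
  have hfact : Real.Gamma ((n:ℝ) + 1) = n.factorial := Real.Gamma_nat_eq_factorial n
  have hGn : Real.Gamma ((n:ℝ) + 1) = n * Real.Gamma n :=
    Real.Gamma_add_one hn0.ne'
  have hGpos : 0 < Real.Gamma (n:ℝ) := Real.Gamma_pos_of_pos hn0
  have hlog : Real.log (Real.Gamma n) = Real.log n.factorial - Real.log n := by
    rw [← hfact, hGn, Real.log_mul hn0.ne' hGpos.ne']; ring
  calc Real.log (Real.Gamma ((n:ℝ) + s)) ≤
      (1 - s) * Real.log (Real.Gamma n) + s * Real.log (Real.Gamma ((n:ℝ) + 1)) := hc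
    _ = Real.log n.factorial - (1 - s) * Real.log n := by
        rw [hlog, hfact]; ring

lemma logGamma_lower (n : ℕ) (hn : 1 ≤ n) {s : ℝ} (hs0 : 0 ≤ s) (hs1 : s ≤ 1) :
    Real.log n.factorial - (1 - s) * Real.log ((n:ℝ) + s) ≤
      Real.log (Real.Gamma ((n:ℝ) + s)) := by
  have hn0 : (0:ℝ) < n := by exact_mod_cast hn
  have hns : (0:ℝ) < (n:ℝ) + s := by linarith
  have hc := Real.convexOn_log_Gamma.2 (mem_Ioi.2 hns)
    (mem_Ioi.2 (by linarith : (0:ℝ) < (n:ℝ) + 1 + s)) hs0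
    (by linarith : (0:ℝ) ≤ 1 - s) (by ring)
  simp only [smul_eq_mul, Function.comp_apply] at hc
  have hx : s * ((n:ℝ) + s) + (1 - s) * ((n:ℝ) + 1 + s) = (n:ℝ) + 1 := by ring
  rw [hx] at hc
  have hGpos : 0 < Real.Gamma ((n:ℝ) + s) := Real.Gamma_pos_of_pos hns
  have hG1 : Real.Gamma ((n:ℝ) + 1 + s) = ((n:ℝ) + s) * Real.Gamma ((n:ℝ) + s) := by
    have := Real.Gamma_add_one hns.ne'
    rw [← this]; ring_nf
  have hfact : Real.Gamma ((n:ℝ) + 1) = n.factorial := Real.Gamma_nat_eq_factorial n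
  rw [hfact, hG1, Real.log_mul hns.ne' hGpos.ne'] at hc
  nlinarith [hc]

lemma LL_bounds {x : ℝ} (hx : 2 ≤ x) :
    dd ⌊x⌋₊ - 1/(x-1) ≤ LL x ∧ LL x ≤ dd ⌊x⌋₊ + 1/(x-1) := by
  set n : ℕ := ⌊x⌋₊ with hn
  have hx0 : (0:ℝ) < x := by linarith
  have hn1 : 1 ≤ n := Nat.le_floor (by exact_mod_cast (by linarith : (1:ℝ) ≤ x))
  have hnx : (n:ℝ) ≤ x := Nat.floor_le hx0.le
  have hxn : x < (n:ℝ) + 1 := Nat.lt_floor_add_one x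
  have hn0 : (0:ℝ) < n := by exact_mod_cast hn1
  have hnx1 : x - 1 ≤ (n:ℝ) := by linarith
  have hs0 : (0:ℝ) ≤ x - n := by linarith
  have hs1 : x - (n:ℝ) ≤ 1 := by linarith
  have hxns : (n:ℝ) + (x - n) = x := by ring
  have hup := logGamma_upper n hn1 hs0 hs1
  have hlo := logGamma_lower n hn1 hs0 hs1
  rw [hxns] at hup hlo
  have hGx : 0 < Real.Gamma x := Real.Gamma_pos_of_pos hx0
  have hLL : LL x = Real.log x + Real.log (Real.Gamma x)
      - (x * Real.log x - x + (Real.log (2*π) + Real.log x)/2) := by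
    rw [LL, Real.Gamma_add_one hx0.ne', Real.log_mul hx0.ne' hGx.ne',
      Real.log_mul (by positivity) hx0.ne']
  have hdd : dd n = Real.log n.factorial
      - ((n:ℝ) * Real.log n - n + (Real.log (2*π) + Real.log n)/2) := by
    rw [dd, Real.log_mul (by positivity) hn0.ne']
  have hD1 : Real.log x - Real.log n ≤ (x - n) / n := by
    have h := Real.log_le_sub_one_of_pos (show (0:ℝ) < x / n by positivity)
    rw [Real.log_div hx0.ne' hn0.ne'] at h
    have h2 : x / (n:ℝ) - 1 = (x - n)/n := by field_simp
    linarith [h2 ▸ h]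
  have hD2 : (x - n) / x ≤ Real.log x - Real.log n := by
    have h := Real.log_le_sub_one_of_pos (show (0:ℝ) < (n:ℝ) / x by positivity)
    rw [Real.log_div hn0.ne' hx0.ne'] at h
    have h2 : (n:ℝ)/x - 1 = -((x - n)/x) := by field_simp; ring
    linarith [h2 ▸ h]
  constructor
  · -- lower bound
    have keyeq : Real.log x + (Real.log n.factorial - (1-(x-(n:ℝ))) * Real.log x)
        - (x * Real.log x - x + (Real.log (2*π) + Real.log x)/2)
        = dd n + (((n:ℝ)+1/2) * (Real.log n - Real.log x) + (x - n)) := by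
      rw [hdd]; ring
    have key : dd n + (((n:ℝ)+1/2) * (Real.log n - Real.log x) + (x - n)) ≤ LL x := by
      rw [hLL, ← keyeq]; linarith
    have h3 : ((n:ℝ)+1/2) * (Real.log x - Real.log n) ≤ ((n:ℝ)+1/2) * ((x-n)/n) :=
      mul_le_mul_of_nonneg_left hD1 (by linarith)
    have h4 : ((n:ℝ)+1/2) * ((x-n)/n) = (x-n) + (x-n)/(2*n) := by field_simp
    have h5 : (x-n)/(2*n) ≤ 1/(x-1) := by
      rw [div_le_div_iff₀ (by positivity) (by linarith)]
      nlinarith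
    linarith
  · -- upper bound
    have keyeq : Real.log x + (Real.log n.factorial - (1-(x-(n:ℝ))) * Real.log n)
        - (x * Real.log x - x + (Real.log (2*π) + Real.log x)/2)
        = dd n + ((x - 1/2) * (Real.log n - Real.log x) + (x - n)) := by
      rw [hdd]; ring
    have key : LL x ≤ dd n + ((x - 1/2) * (Real.log n - Real.log x) + (x - n)) := by
      rw [hLL, ← keyeq]; linarith
    have h3 : (x-1/2) * ((x-n)/x) ≤ (x-1/2) * (Real.log x - Real.log n) :=
      mul_le_mul_of_nonneg_left hD2 (by linarith)
    have h4 : (x-1/2)*((x-n)/x) = (x-n) - (x-n)/(2*x) := by field_simp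
    have h5 : (x-n)/(2*x) ≤ 1/(x-1) := by
      rw [div_le_div_iff₀ (by positivity) (by linarith)]
      nlinarith
    linarith

lemma tendsto_err : Tendsto (fun x : ℝ => 1/(x-1)) atTop (nhds 0) := by
  have h1 : Tendsto (fun x : ℝ => x - 1) atTop atTop :=
    tendsto_atTop_add_const_right atTop (-1) tendsto_id
  simpa [one_div, Function.comp_def] using tendsto_inv_atTop_zero.comp h1

lemma tendsto_LL : Tendsto LL atTop (nhds 0) := by
  have hd : Tendsto (fun x : ℝ => dd ⌊x⌋₊) atTop (nhds 0) :=
    tendsto_dd.comp tendsto_nat_floor_atTop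
  refine tendsto_of_tendsto_of_tendsto_of_le_of_le'
    (g := fun x : ℝ => dd ⌊x⌋₊ - 1/(x-1)) (h := fun x : ℝ => dd ⌊x⌋₊ + 1/(x-1))
    (by simpa using hd.sub tendsto_err) (by simpa using hd.add tendsto_err) ?_ ?_
  · filter_upwards [eventually_ge_atTop (2:ℝ)] with x hx using (LL_bounds hx).1
  · filter_upwards [eventually_ge_atTop (2:ℝ)] with x hx using (LL_bounds hx).2

noncomputable def gg (t : ℝ) : ℝ :=
  1 + t/2 + t^2/8 + t^3/240 - 11*t^4/1920 + 79*t^5/26880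

lemma gg_pos {t : ℝ} (h0 : 0 ≤ t) (h1 : t ≤ 1) : 0 < gg t := by
  unfold gg; nlinarith [pow_le_one₀ h0 h1 (n := 4), pow_nonneg h0 5, pow_nonneg h0 3]

lemma tendsto_gg : Tendsto (fun x : ℝ => gg x⁻¹) atTop (nhds 1) := by
  have hc : Continuous gg := by unfold gg; continuity
  have := (hc.tendsto 0).comp tendsto_inv_atTop_zero
  have h0 : gg 0 = 1 := by norm_num [gg]
  simpa [Function.comp_def, h0] using this

lemma hQeq {x : ℝ} (hx : 1 ≤ x) :
    (8 * x ^ 3 + 4 * x ^ 2 + x + (1 - 11 / (8 * x) + 79 / (112 * x ^ 2)) / 30)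
      / (8 * x ^ 3) = gg x⁻¹ := by
  have hx0 : x ≠ 0 := by positivity
  unfold gg
  field_simp
  ring

end StirlingAux

theorem stmt_8 :
    Tendsto (fun x : ℝ => Gamma (x + 1) /
      (Real.sqrt π * (x / exp 1) ^ x *
        (8 * x ^ 3 + 4 * x ^ 2 + x +
          (1 - 11 / (8 * x) + 79 / (112 * x ^ 2)) / 30) ^ ((1:ℝ)/6))) atTop (nhds 1) := by
  have hA : Tendsto (fun x => Real.exp (LL x)) atTop (nhds 1) := by
    simpa [Function.comp_def] using (Real.continuous_exp.tendsto 0).comp tendsto_LL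
  have hB : Tendsto (fun x : ℝ => ((gg x⁻¹)⁻¹) ^ ((1:ℝ)/6)) atTop (nhds 1) := by
    have h1 : Tendsto (fun x : ℝ => (gg x⁻¹)⁻¹) atTop (nhds 1) := by
      simpa using tendsto_gg.inv₀ one_ne_zero
    have h2 : ContinuousAt (fun y : ℝ => y ^ ((1:ℝ)/6)) 1 :=
      Real.continuousAt_rpow_const 1 (1/6) (Or.inl one_ne_zero)
    simpa [Real.one_rpow, Function.comp_def] using h2.tendsto.comp h1
  have := hA.mul hB
  rw [mul_one] at this
  refine this.congr' ?_
  filter_upwards [eventually_ge_atTop (1:ℝ)] with x hx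
  have hx0 : (0:ℝ) < x := by linarith
  set Q : ℝ := 8 * x ^ 3 + 4 * x ^ 2 + x + (1 - 11 / (8 * x) + 79 / (112 * x ^ 2)) / 30 with hQ
  have hg : 0 < gg x⁻¹ := gg_pos (by positivity) (by
    rw [inv_le_one_iff₀]; right; exact hx)
  have hq8 : Q / (8 * x^3) = gg x⁻¹ := hQeq hx
  have hQpos : 0 < Q := by
    have := (div_eq_iff (by positivity : (8:ℝ) * x^3 ≠ 0)).1 hq8
    rw [this]; positivity
  have hR : (0:ℝ) < (x / exp 1) ^ x := Real.rpow_pos_of_pos (by positivity) x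
  -- exp (LL x) = Γ(x+1) / (√(2πx) * (x/e)^x)
  have hGpos : 0 < Real.Gamma (x + 1) := Real.Gamma_pos_of_pos (by linarith)
  have e1 : (x / exp 1) ^ x = Real.exp (x * Real.log x - x) := by
    rw [Real.rpow_def_of_pos (by positivity : (0:ℝ) < x / exp 1),
      Real.log_div hx0.ne' (Real.exp_ne_zero 1), Real.log_exp]
    congr 1
    ring
  have e2 : Real.sqrt (2*π*x) = Real.exp (Real.log (2*π*x)/2) := by
    rw [Real.sqrt_eq_rpow, Real.rpow_def_of_pos (by positivity : (0:ℝ) < 2*π*x)]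
    congr 1
    ring
  have hexp : Real.exp (LL x) =
      Real.Gamma (x + 1) / (Real.sqrt (2 * π * x) * (x / exp 1) ^ x) := by
    rw [LL, Real.exp_sub, Real.exp_log hGpos, e1, e2, ← Real.exp_add]
    congr 2
    ring
  -- √(2πx) = √π * (8x³)^(1/6)
  have h8 : ((8:ℝ) * x^3) ^ ((1:ℝ)/6) = Real.sqrt (2*x) := by
    have : (8:ℝ) * x^3 = (2*x)^(3:ℕ) := by ring
    rw [this, ← Real.rpow_natCast (2*x) 3, ← Real.rpow_mul (by positivity),
      Real.sqrt_eq_rpow]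
    norm_num
  have hsqrt : Real.sqrt (2*π*x) = Real.sqrt π * ((8:ℝ) * x^3) ^ ((1:ℝ)/6) := by
    rw [h8, ← Real.sqrt_mul pi_pos.le]
    ring_nf
  -- Q^(1/6) relation
  have hQr : Q ^ ((1:ℝ)/6) = ((8:ℝ)*x^3) ^ ((1:ℝ)/6) * (gg x⁻¹) ^ ((1:ℝ)/6) := by
    have hQ' : Q = gg x⁻¹ * (8*x^3) := (div_eq_iff (by positivity : (8:ℝ)*x^3 ≠ 0)).1 hq8
    rw [hQ', Real.mul_rpow hg.le (by positivity), mul_comm]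
  have h8pos : (0:ℝ) < ((8:ℝ)*x^3) ^ ((1:ℝ)/6) := Real.rpow_pos_of_pos (by positivity) _
  have hgr : (0:ℝ) < (gg x⁻¹) ^ ((1:ℝ)/6) := Real.rpow_pos_of_pos hg _
  have hginv : ((gg x⁻¹)⁻¹) ^ ((1:ℝ)/6) = ((gg x⁻¹) ^ ((1:ℝ)/6))⁻¹ :=
    Real.inv_rpow hg.le _
  show Real.exp (LL x) * ((gg x⁻¹)⁻¹) ^ ((1:ℝ)/6)
      = Real.Gamma (x+1) / (Real.sqrt π * (x / exp 1) ^ x * Q ^ ((1:ℝ)/6))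
  rw [hexp, hsqrt, hQr, hginv]
  have hπ : (0:ℝ) < Real.sqrt π := Real.sqrt_pos.2 pi_pos
  field_simp
end

section
/- Chen's formula is asymptotic to the Gamma function: lim_{x→∞} Γ(x+1) / (√(2πx)·(x/e)^x·(1 + 1/(12x³ + (24/7)x - 1/2))^(x² + 53/210)) = 1. -/
open Real Filter

noncomputable def SF (x : ℝ) : ℝ := Real.sqrt (2 * π * x) * (x / Real.exp 1) ^ x

lemma SF_pos {x : ℝ} (hx : 0 < x) : 0 < SF x := by
  have h1 : (0:ℝ) < Real.sqrt (2 * π * x) := by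
    apply Real.sqrt_pos.2; positivity
  have h2 : (0:ℝ) < (x / Real.exp 1) ^ x :=
    Real.rpow_pos_of_pos (by positivity) _
  exact mul_pos h1 h2

lemma log_SF {x : ℝ} (hx : 0 < x) :
    Real.log (SF x) = (Real.log (2 * π) + Real.log x) / 2 + (x * Real.log x - x) := by
  have h2π : (0:ℝ) < 2 * π := by positivity
  have hxe : (0:ℝ) < x / Real.exp 1 := by positivity
  rw [SF, Real.log_mul (by positivity) (Real.rpow_pos_of_pos hxe x).ne',
    Real.log_sqrt (by positivity), Real.log_rpow hxe,
    Real.log_mul h2π.ne' hx.ne', Real.log_div hx.ne' (Real.exp_ne_zero 1), Real.log_exp]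
  ring

/-- Pure arithmetic form of the upper error bound. -/
lemma Ebound_arith (N x a b c : ℝ) (hN : 1 ≤ N) (hNx : N ≤ x) (hxN : x < N + 1)
    (hx : 2 ≤ x) (k1 : a ≤ b) (k2 : (x - N) / x ≤ b - a) (k3 : c - a ≤ 1 / N) :
    (x - N) * c + (a - b) / 2 + N * a - x * b + (x - N) ≤ 2 / (x - 1) := by
  set θ := x - N with hθ
  clear_value θ
  have hθ0 : 0 ≤ θ := by rw [hθ]; linarith
  have hθ1 : θ ≤ 1 := by rw [hθ]; linarith
  have hxpos : (0:ℝ) < x := by linarith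
  have hNpos : (0:ℝ) < N := by linarith
  have key : θ * c + N * a - x * b + θ = θ * (c - b) + N * (a - b) + θ := by
    rw [hθ]; ring
  have p1 : θ * (c - b) ≤ θ * (1 / N) :=
    mul_le_mul_of_nonneg_left (by linarith) hθ0
  have p2 : N * (a - b) ≤ N * (-(θ / x)) :=
    mul_le_mul_of_nonneg_left (by linarith) hNpos.le
  have p3 : θ * (1 / N) ≤ 1 / N := by
    have : (0:ℝ) ≤ 1 / N := by positivity
    nlinarith
  have p4 : θ + N * -(θ / x) = θ ^ 2 / x := by
    rw [hθ]; field_simp; ring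
  have p5 : θ ^ 2 / x ≤ 1 / x := by
    gcongr
    nlinarith
  have p6 : 1 / N ≤ 1 / (x - 1) := by
    apply one_div_le_one_div_of_le (by linarith) (by linarith)
  have p7 : 1 / x ≤ 1 / (x - 1) := by
    apply one_div_le_one_div_of_le (by linarith) (by linarith)
  have p8 : 2 / (x - 1) = 1 / (x - 1) + 1 / (x - 1) := by ring
  linarith only [key, p1, p2, p3, p4, p5, p6, p7, p8, k1]

/-- Pure arithmetic form of the lower error bound. -/
lemma Gbound_arith (M x a b L d : ℝ) (hM : 2 ≤ M) (hxM : x ≤ M) (hMx : M ≤ x + 1)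
    (hx : 2 ≤ x) (k1 : b ≤ a) (k2 : (M - x) / M ≤ a - b) (k3 : L ≤ d)
    (k4 : d - a ≤ 1 / M) :
    -(2 / (x - 1)) ≤ (a - b) / 2 + M * a - x * b - (M - x) - (M - x) * L := by
  set s := M - x with hs
  clear_value s
  have hs0 : 0 ≤ s := by rw [hs]; linarith
  have hs1 : s ≤ 1 := by rw [hs]; linarith
  have hxpos : (0:ℝ) < x := by linarith
  have hMpos : (0:ℝ) < M := by linarith
  have key : (a - b) / 2 + M * a - x * b - s - s * L
      = (a - b) / 2 + x * (a - b) + s * a - s - s * L := by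
    rw [hs]; ring
  have q1 : x * (s / M) ≤ x * (a - b) :=
    mul_le_mul_of_nonneg_left k2 hxpos.le
  have q2 : s * L ≤ s * d := mul_le_mul_of_nonneg_left k3 hs0
  have q3 : s * (d - a) ≤ s * (1 / M) := mul_le_mul_of_nonneg_left k4 hs0
  have q3' : s * (d - a) = s * d - s * a := by ring
  have q4 : x * (s / M) = s - s ^ 2 / M := by
    rw [hs]; field_simp; ring
  have q5 : s ^ 2 / M ≤ 1 / M := by
    gcongr
    nlinarith
  have q6 : s * (1 / M) ≤ 1 / M := by
    have : (0:ℝ) ≤ 1 / M := by positivity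
    nlinarith
  have q7 : 1 / M ≤ 1 / (x - 1) := by
    apply one_div_le_one_div_of_le (by linarith) (by linarith)
  have p8 : 2 / (x - 1) = 1 / (x - 1) + 1 / (x - 1) := by ring
  linarith only [key, q1, q2, q3, q3', q4, q5, q6, q7, p8, k1]

lemma Gamma_upper {x : ℝ} (hx : 2 ≤ x) :
    Real.log (Real.Gamma (x + 1)) ≤
      Real.log (Nat.factorial ⌊x⌋₊) + (x - ⌊x⌋₊) * Real.log ((⌊x⌋₊ : ℝ) + 1) := by
  have hx0 : (0:ℝ) ≤ x := by linarith
  have hn : (⌊x⌋₊ : ℝ) ≤ x := Nat.floor_le hx0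
  have hxn : x < (⌊x⌋₊ : ℝ) + 1 := Nat.lt_floor_add_one x
  have hNpos : (0:ℝ) < (⌊x⌋₊ : ℝ) := by linarith
  set n := ⌊x⌋₊ with hndef
  have hθ0 : (0:ℝ) ≤ x - n := by linarith
  rcases eq_or_lt_of_le hθ0 with h0 | hθpos
  · -- x = n exactly
    have hxeq : x = (n : ℝ) := by linarith
    rw [hxeq, Real.Gamma_nat_eq_factorial]
    simp
  · have H := Real.Gamma_mul_add_mul_le_rpow_Gamma_mul_rpow_Gamma
      (s := (n:ℝ) + 1) (t := (n:ℝ) + 2) (a := 1 - (x - n)) (b := x - n)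
      (by linarith) (by linarith) (by linarith) hθpos (by ring)
    have harg : (1 - (x - n)) * ((n:ℝ) + 1) + (x - n) * ((n:ℝ) + 2) = x + 1 := by ring
    rw [harg] at H
    have hfac1 : Real.Gamma ((n:ℝ) + 1) = Nat.factorial n := Real.Gamma_nat_eq_factorial n
    have hfac2 : Real.Gamma ((n:ℝ) + 2) = Nat.factorial (n + 1) := by
      have : ((n:ℝ) + 2) = ((n + 1 : ℕ) : ℝ) + 1 := by push_cast; ring
      rw [this, Real.Gamma_nat_eq_factorial]
    rw [hfac1, hfac2] at H
    have hf1 : (0:ℝ) < Nat.factorial n := by positivity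
    have hf2 : (0:ℝ) < Nat.factorial (n + 1) := by positivity
    have hΓpos : 0 < Real.Gamma (x + 1) := Real.Gamma_pos_of_pos (by linarith)
    have := Real.log_le_log hΓpos H
    rw [Real.log_mul (Real.rpow_pos_of_pos hf1 _).ne' (Real.rpow_pos_of_pos hf2 _).ne',
      Real.log_rpow hf1, Real.log_rpow hf2] at this
    have hsucc : Real.log (Nat.factorial (n + 1))
        = Real.log ((n:ℝ) + 1) + Real.log (Nat.factorial n) := by
      have : ((Nat.factorial (n + 1) : ℝ)) = ((n:ℝ) + 1) * Nat.factorial n := by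
        push_cast [Nat.factorial_succ]; ring
      rw [this, Real.log_mul (by positivity) hf1.ne']
    rw [hsucc] at this
    calc Real.log (Real.Gamma (x + 1))
        ≤ (1 - (x - n)) * Real.log (Nat.factorial n)
          + (x - n) * (Real.log ((n:ℝ) + 1) + Real.log (Nat.factorial n)) := this
      _ = Real.log (Nat.factorial n) + (x - n) * Real.log ((n:ℝ) + 1) := by ring

lemma Gamma_lower {x : ℝ} (hx : 2 ≤ x) :
    Real.log (Nat.factorial (⌊x⌋₊ + 1)) - (1 - (x - ⌊x⌋₊)) * Real.log (x + 1) ≤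
      Real.log (Real.Gamma (x + 1)) := by
  have hx0 : (0:ℝ) ≤ x := by linarith
  have hn : (⌊x⌋₊ : ℝ) ≤ x := Nat.floor_le hx0
  have hxn : x < (⌊x⌋₊ : ℝ) + 1 := Nat.lt_floor_add_one x
  have hNpos : (0:ℝ) < (⌊x⌋₊ : ℝ) := by linarith
  set n := ⌊x⌋₊ with hndef
  have hθ0 : (0:ℝ) ≤ x - n := by linarith
  have hΓpos : 0 < Real.Gamma (x + 1) := Real.Gamma_pos_of_pos (by linarith)
  rcases eq_or_lt_of_le hθ0 with h0 | hθpos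
  · have hxeq : x = (n : ℝ) := by linarith
    rw [hxeq, Real.Gamma_nat_eq_factorial]
    have : ((n:ℝ) + 1) = ((n + 1 : ℕ) : ℝ) := by push_cast; ring
    rw [this]
    have hsucc : Real.log (Nat.factorial (n + 1))
        = Real.log ((n + 1 : ℕ) : ℝ) + Real.log (Nat.factorial n) := by
      have h2 : ((Nat.factorial (n + 1) : ℝ)) = ((n + 1 : ℕ) : ℝ) * Nat.factorial n := by
        push_cast [Nat.factorial_succ]; ring
      rw [h2, Real.log_mul (by positivity) (by positivity)]
    rw [hsucc]
    simp [h0.symm]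
  · have H := Real.Gamma_mul_add_mul_le_rpow_Gamma_mul_rpow_Gamma
      (s := x + 1) (t := x + 2) (a := x - n) (b := 1 - (x - n))
      (by linarith) (by linarith) hθpos (by linarith) (by ring)
    have harg : (x - n) * (x + 1) + (1 - (x - n)) * (x + 2) = (n:ℝ) + 2 := by ring
    rw [harg] at H
    have hΓ2 : Real.Gamma (x + 2) = (x + 1) * Real.Gamma (x + 1) := by
      have : x + 2 = (x + 1) + 1 := by ring
      rw [this, Real.Gamma_add_one (by linarith)]
    rw [hΓ2] at H
    have hx1pos : (0:ℝ) < x + 1 := by linarith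
    have hrw : Real.Gamma (x + 1) ^ (x - n) * ((x + 1) * Real.Gamma (x + 1)) ^ (1 - (x - n))
        = Real.Gamma (x + 1) * (x + 1) ^ (1 - (x - n)) := by
      rw [Real.mul_rpow hx1pos.le hΓpos.le, ← mul_assoc,
        mul_comm (Real.Gamma (x + 1) ^ (x - n)) ((x + 1) ^ (1 - (x - n)) : ℝ), mul_assoc,
        ← Real.rpow_add hΓpos]
      norm_num
      ring_nf
    rw [hrw] at H
    have hfac2 : Real.Gamma ((n:ℝ) + 2) = Nat.factorial (n + 1) := by
      have : ((n:ℝ) + 2) = ((n + 1 : ℕ) : ℝ) + 1 := by push_cast; ring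
      rw [this, Real.Gamma_nat_eq_factorial]
    rw [hfac2] at H
    have hf2 : (0:ℝ) < Nat.factorial (n + 1) := by positivity
    have := Real.log_le_log hf2 H
    rw [Real.log_mul hΓpos.ne' (Real.rpow_pos_of_pos hx1pos _).ne',
      Real.log_rpow hx1pos] at this
    linarith

lemma logfact_SF (n : ℕ) (hn : 1 ≤ n) :
    Real.log (Nat.factorial n) - Real.log (SF n) =
      Real.log (Stirling.stirlingSeq n) - Real.log (Real.sqrt π) := by
  have hnpos : (0:ℝ) < (n:ℝ) := by exact_mod_cast hn
  have hSF : 0 < SF n := SF_pos hnpos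
  have hf : (0:ℝ) < Nat.factorial n := by positivity
  have hden : (0:ℝ) < Real.sqrt (2 * (n:ℝ)) * ((n:ℝ) / Real.exp 1) ^ n := by
    have : (0:ℝ) < (n:ℝ) / Real.exp 1 := by positivity
    positivity
  have hss : 0 < Stirling.stirlingSeq n := by
    rw [Stirling.stirlingSeq]
    positivity
  have hsp : (0:ℝ) < Real.sqrt π := Real.sqrt_pos.2 Real.pi_pos
  have hratio : (Nat.factorial n : ℝ) / SF n = Stirling.stirlingSeq n / Real.sqrt π := by
    rw [Stirling.stirlingSeq, SF]
    rw [show (2 * π * (n:ℝ)) = π * (2 * n) by ring, Real.sqrt_mul Real.pi_pos.le,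
      Real.rpow_natCast]
    field_simp
  calc Real.log (Nat.factorial n) - Real.log (SF n)
      = Real.log ((Nat.factorial n : ℝ) / SF n) := (Real.log_div hf.ne' hSF.ne').symm
    _ = Real.log (Stirling.stirlingSeq n / Real.sqrt π) := by rw [hratio]
    _ = Real.log (Stirling.stirlingSeq n) - Real.log (Real.sqrt π) :=
        Real.log_div hss.ne' hsp.ne'

lemma upper_bound_s9 {x : ℝ} (hx : 2 ≤ x) :
    Real.log (Real.Gamma (x + 1)) - Real.log (SF x) ≤
      (Real.log (Stirling.stirlingSeq ⌊x⌋₊) - Real.log (Real.sqrt π)) + 2 / (x - 1) := by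
  have hx0 : (0:ℝ) < x := by linarith
  have hn : (⌊x⌋₊ : ℝ) ≤ x := Nat.floor_le hx0.le
  have hxn : x < (⌊x⌋₊ : ℝ) + 1 := Nat.lt_floor_add_one x
  have hn2 : 2 ≤ ⌊x⌋₊ := Nat.le_floor (by exact_mod_cast hx)
  set n := ⌊x⌋₊ with hndef
  have hNpos : (0:ℝ) < (n:ℝ) := by
    have : (1:ℝ) ≤ (n:ℝ) := by exact_mod_cast Nat.one_le_of_lt hn2
    linarith
  have hN1 : (1:ℝ) ≤ (n:ℝ) := by exact_mod_cast Nat.one_le_of_lt hn2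
  -- log inequalities
  have k1 : Real.log (n:ℝ) ≤ Real.log x := Real.log_le_log hNpos hn
  have k2 : (x - (n:ℝ)) / x ≤ Real.log x - Real.log (n:ℝ) := by
    have h1 := Real.one_sub_inv_le_log_of_pos (x := x / (n:ℝ)) (by positivity)
    rw [Real.log_div hx0.ne' hNpos.ne'] at h1
    have h2 : (x / (n:ℝ))⁻¹ = (n:ℝ) / x := by rw [inv_div]
    rw [h2] at h1
    have h3 : (x - (n:ℝ)) / x = 1 - (n:ℝ) / x := by field_simp
    linarith
  have k3 : Real.log ((n:ℝ) + 1) - Real.log (n:ℝ) ≤ 1 / (n:ℝ) := by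
    have h1 := Real.log_le_sub_one_of_pos (x := ((n:ℝ) + 1) / (n:ℝ)) (by positivity)
    rw [Real.log_div (by positivity) hNpos.ne'] at h1
    have h2 : ((n:ℝ) + 1) / (n:ℝ) - 1 = 1 / (n:ℝ) := by field_simp; ring
    linarith
  have hE := Ebound_arith (n:ℝ) x (Real.log (n:ℝ)) (Real.log x) (Real.log ((n:ℝ) + 1))
    hN1 hn hxn hx k1 k2 k3
  have hGam := Gamma_upper hx
  rw [← hndef] at hGam
  have hlogSFn := log_SF hNpos
  have hlogSFx := log_SF hx0
  have hfe := logfact_SF n (by omega)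
  linarith

lemma lower_bound_s9 {x : ℝ} (hx : 2 ≤ x) :
    (Real.log (Stirling.stirlingSeq (⌊x⌋₊ + 1)) - Real.log (Real.sqrt π)) - 2 / (x - 1) ≤
      Real.log (Real.Gamma (x + 1)) - Real.log (SF x) := by
  have hx0 : (0:ℝ) < x := by linarith
  have hn : (⌊x⌋₊ : ℝ) ≤ x := Nat.floor_le hx0.le
  have hxn : x < (⌊x⌋₊ : ℝ) + 1 := Nat.lt_floor_add_one x
  have hn2 : 2 ≤ ⌊x⌋₊ := Nat.le_floor (by exact_mod_cast hx)
  set n := ⌊x⌋₊ with hndef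
  set M : ℝ := (n:ℝ) + 1 with hMdef
  have hM2 : 2 ≤ M := by
    have : (2:ℝ) ≤ (n:ℝ) := by exact_mod_cast hn2
    rw [hMdef]; linarith
  have hMpos : (0:ℝ) < M := by linarith
  have k1 : Real.log x ≤ Real.log M := Real.log_le_log hx0 (by linarith)
  have k2 : (M - x) / M ≤ Real.log M - Real.log x := by
    have h1 := Real.one_sub_inv_le_log_of_pos (x := M / x) (by positivity)
    rw [Real.log_div hMpos.ne' hx0.ne'] at h1
    have h2 : (M / x)⁻¹ = x / M := by rw [inv_div]
    rw [h2] at h1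
    have h3 : (M - x) / M = 1 - x / M := by field_simp
    linarith
  have k3 : Real.log (x + 1) ≤ Real.log (M + 1) := Real.log_le_log (by linarith) (by linarith)
  have k4 : Real.log (M + 1) - Real.log M ≤ 1 / M := by
    have h1 := Real.log_le_sub_one_of_pos (x := (M + 1) / M) (by positivity)
    rw [Real.log_div (by positivity) hMpos.ne'] at h1
    have h2 : (M + 1) / M - 1 = 1 / M := by field_simp; ring
    linarith
  have hG := Gbound_arith M x (Real.log M) (Real.log x) (Real.log (x + 1))
    (Real.log (M + 1)) hM2 (by linarith) (by linarith) hx k1 k2 k3 k4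
  have hGam := Gamma_lower hx
  rw [← hndef] at hGam
  have hlogSFM := log_SF hMpos
  have hlogSFx := log_SF hx0
  have hfe := logfact_SF (n + 1) (by omega)
  have hcast : ((n + 1 : ℕ) : ℝ) = M := by rw [hMdef]; push_cast; ring
  rw [hcast] at hfe
  have hexp : (1 : ℝ) - (x - (n:ℝ)) = M - x := by rw [hMdef]; ring
  rw [hexp] at hGam
  clear_value n M
  linarith

set_option maxHeartbeats 1000000 in
lemma tendsto_log_sub :
    Tendsto (fun x : ℝ => Real.log (Real.Gamma (x + 1)) - Real.log (SF x)) atTop (nhds 0) := by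
  have hsp : (0:ℝ) < Real.sqrt π := Real.sqrt_pos.2 Real.pi_pos
  have hlogss : Tendsto (fun n : ℕ => Real.log (Stirling.stirlingSeq n) - Real.log (Real.sqrt π))
      atTop (nhds 0) := by
    have h1 : Tendsto (fun n : ℕ => Real.log (Stirling.stirlingSeq n)) atTop
        (nhds (Real.log (Real.sqrt π))) :=
      ((Real.continuousAt_log hsp.ne').tendsto).comp Stirling.tendsto_stirlingSeq_sqrt_pi
    simpa using h1.sub_const (Real.log (Real.sqrt π))
  have hfloor : Tendsto (fun x : ℝ => ⌊x⌋₊) atTop atTop := tendsto_nat_floor_atTop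
  have hfloor1 : Tendsto (fun x : ℝ => ⌊x⌋₊ + 1) atTop atTop :=
    (tendsto_add_atTop_nat 1).comp hfloor
  have hr : Tendsto (fun x : ℝ => 2 / (x - 1)) atTop (nhds 0) := by
    apply Tendsto.div_atTop (tendsto_const_nhds)
    exact tendsto_atTop_add_const_right _ (-1) tendsto_id
  have hup : Tendsto (fun x : ℝ =>
      (Real.log (Stirling.stirlingSeq ⌊x⌋₊) - Real.log (Real.sqrt π)) + 2 / (x - 1))
      atTop (nhds 0) := by
    have := (hlogss.comp hfloor).add hr
    simpa using this
  have hlo : Tendsto (fun x : ℝ =>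
      (Real.log (Stirling.stirlingSeq (⌊x⌋₊ + 1)) - Real.log (Real.sqrt π)) - 2 / (x - 1))
      atTop (nhds 0) := by
    have := (hlogss.comp hfloor1).sub hr
    simpa using this
  apply tendsto_of_tendsto_of_tendsto_of_le_of_le' hlo hup
  · filter_upwards [eventually_ge_atTop (2:ℝ)] with x hx
    exact lower_bound_s9 hx
  · filter_upwards [eventually_ge_atTop (2:ℝ)] with x hx
    exact upper_bound_s9 hx

lemma ratio_tendsto :
    Tendsto (fun x : ℝ => Real.Gamma (x + 1) / SF x) atTop (nhds 1) := by
  have h := (Real.continuous_exp.tendsto 0).comp tendsto_log_sub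
  rw [Real.exp_zero] at h
  apply h.congr'
  filter_upwards [eventually_ge_atTop (2:ℝ)] with x hx
  have hx0 : (0:ℝ) < x := by linarith
  have hΓpos : 0 < Real.Gamma (x + 1) := Real.Gamma_pos_of_pos (by linarith)
  have hSF : 0 < SF x := SF_pos hx0
  simp only [Function.comp_apply]
  rw [← Real.log_div hΓpos.ne' hSF.ne', Real.exp_log (by positivity)]

lemma corr_tendsto :
    Tendsto (fun x : ℝ =>
      (1 + 1 / (12 * x ^ 3 + (24/7) * x - 1/2)) ^ (x ^ 2 + 53/210)) atTop (nhds 1) := by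
  have hD : ∀ x : ℝ, 1 ≤ x → (0:ℝ) < 12 * x ^ 3 + (24/7) * x - 1/2 := by
    intro x hx
    have h3 : (1:ℝ) ^ 3 ≤ x ^ 3 := pow_le_pow_left₀ (by norm_num) hx 3
    norm_num at h3
    nlinarith
  have hlog : Tendsto (fun x : ℝ =>
      Real.log (1 + 1 / (12 * x ^ 3 + (24/7) * x - 1/2)) * (x ^ 2 + 53/210)) atTop (nhds 0) := by
    have h1x : Tendsto (fun x : ℝ => 1 / x) atTop (nhds 0) := by
      apply Tendsto.div_atTop tendsto_const_nhds tendsto_id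
    apply tendsto_of_tendsto_of_tendsto_of_le_of_le' tendsto_const_nhds h1x
    · filter_upwards [eventually_ge_atTop (1:ℝ)] with x hx
      have hDx := hD x hx
      have hu : (0:ℝ) ≤ 1 / (12 * x ^ 3 + (24/7) * x - 1/2) := by positivity
      have hlogpos : 0 ≤ Real.log (1 + 1 / (12 * x ^ 3 + (24/7) * x - 1/2)) :=
        Real.log_nonneg (by linarith)
      have hp : (0:ℝ) ≤ x ^ 2 + 53/210 := by positivity
      positivity
    · filter_upwards [eventually_ge_atTop (1:ℝ)] with x hx
      have hDx := hD x hx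
      have hxpos : (0:ℝ) < x := by linarith
      have hu : (0:ℝ) < 1 / (12 * x ^ 3 + (24/7) * x - 1/2) := by positivity
      have hlogle : Real.log (1 + 1 / (12 * x ^ 3 + (24/7) * x - 1/2)) ≤
          1 / (12 * x ^ 3 + (24/7) * x - 1/2) := by
        have := Real.log_le_sub_one_of_pos (x := 1 + 1 / (12 * x ^ 3 + (24/7) * x - 1/2))
          (by linarith)
        linarith
      have hp : (0:ℝ) ≤ x ^ 2 + 53/210 := by positivity
      have step1 : Real.log (1 + 1 / (12 * x ^ 3 + (24/7) * x - 1/2)) * (x ^ 2 + 53/210) ≤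
          1 / (12 * x ^ 3 + (24/7) * x - 1/2) * (x ^ 2 + 53/210) :=
        mul_le_mul_of_nonneg_right hlogle hp
      have step2 : 1 / (12 * x ^ 3 + (24/7) * x - 1/2) * (x ^ 2 + 53/210) ≤ 1 / x := by
        rw [div_mul_eq_mul_div, one_mul, div_le_div_iff₀ hDx hxpos]
        nlinarith
      linarith
  have h := (Real.continuous_exp.tendsto 0).comp hlog
  rw [Real.exp_zero] at h
  apply h.congr'
  filter_upwards [eventually_ge_atTop (1:ℝ)] with x hx
  have hDx := hD x hx
  have hb : (0:ℝ) < 1 + 1 / (12 * x ^ 3 + (24/7) * x - 1/2) := by positivity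
  simp only [Function.comp_apply]
  rw [Real.rpow_def_of_pos hb]

theorem stmt_9 :
    Tendsto (fun x : ℝ => Gamma (x + 1) /
      (Real.sqrt (2 * π * x) * (x / exp 1) ^ x *
        (1 + 1 / (12 * x ^ 3 + (24/7) * x - 1/2)) ^ (x ^ 2 + 53/210))) atTop (nhds 1) := by
  have h1 := ratio_tendsto
  have h2 := corr_tendsto.inv₀ one_ne_zero
  have h := h1.mul h2
  rw [show (1:ℝ) * 1⁻¹ = 1 by norm_num] at h
  refine h.congr fun x => ?_
  rw [← div_eq_mul_inv, div_div, SF]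
end

section
/- The tweaked Ramanujan (SAM) formula is asymptotic to the Gamma function: lim_{x→∞} Γ(x+1) / (√π·(x/e)^x·(8x³ + 4x² + x + (1 - 11/(8x) + 79/(112x²) + A/x³)/30)^(1/6)) = 1, where A = 380279456577/722091376690. -/
open Real Filter

lemma aux1 {u : ℝ} (hu : 0 < u) : u - 1 ≤ u * log u := by
  have h := Real.log_le_sub_one_of_pos (show (0:ℝ) < u⁻¹ by positivity)
  rw [Real.log_inv] at h
  have h2 : 1 - u⁻¹ ≤ log u := by linarith
  have h3 := mul_le_mul_of_nonneg_left h2 hu.le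
  have h4 : u * u⁻¹ = 1 := mul_inv_cancel₀ hu.ne'
  nlinarith

lemma phi_chord {a b : ℝ} (ha : 0 < a) (hb : 0 < b) :
    (b - a) * log a ≤ b * log b - b - (a * log a - a) := by
  have h := aux1 (div_pos hb ha)
  rw [Real.log_div hb.ne' ha.ne'] at h
  have h2 := mul_le_mul_of_nonneg_left h ha.le
  have h3 : a * (b / a) = b := by field_simp
  rw [mul_sub, mul_comm] at h2
  nlinarith [mul_le_mul_of_nonneg_left h ha.le]

lemma interp {a s : ℝ} (ha : 0 < a) (hs : 0 ≤ s) (hs1 : s ≤ 1) :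
    Gamma (a + s) ≤ Gamma a ^ (1 - s) * Gamma (a + 1) ^ s := by
  have h := Real.convexOn_log_Gamma.2 (Set.mem_Ioi.mpr ha)
    (Set.mem_Ioi.mpr (by linarith : (0:ℝ) < a + 1)) (by linarith : 0 ≤ 1 - s) hs (by ring)
  simp only [smul_eq_mul, Function.comp_apply] at h
  rw [(by ring : (1 - s) * a + s * (a + 1) = a + s)] at h
  have hg1 : 0 < Gamma a := Gamma_pos_of_pos ha
  have hg2 : 0 < Gamma (a + 1) := Gamma_pos_of_pos (by linarith)
  have hg3 : 0 < Gamma (a + s) := Gamma_pos_of_pos (by linarith)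
  calc Gamma (a + s) = Real.exp (log (Gamma (a + s))) := (Real.exp_log hg3).symm
    _ ≤ Real.exp ((1 - s) * log (Gamma a) + s * log (Gamma (a + 1))) := Real.exp_le_exp.mpr h
    _ = Gamma a ^ (1 - s) * Gamma (a + 1) ^ s := by
        rw [Real.exp_add, Real.rpow_def_of_pos hg1, Real.rpow_def_of_pos hg2,
          mul_comm (log (Gamma a)), mul_comm (log (Gamma (a+1)))]

lemma gamma_upper {x : ℝ} (hx : 2 ≤ x) :
    Gamma (x + 1) ≤ (Nat.factorial ⌊x⌋₊ : ℝ) * ((⌊x⌋₊ : ℝ) + 1) ^ (x - ⌊x⌋₊) := by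
  set n := ⌊x⌋₊ with hn
  have hx0 : (0:ℝ) < x := by linarith
  have hnx : (n : ℝ) ≤ x := Nat.floor_le hx0.le
  have hxn : x < (n : ℝ) + 1 := Nat.lt_floor_add_one x
  have hn2 : (2:ℝ) ≤ (n : ℝ) := by exact_mod_cast Nat.le_floor (by exact_mod_cast hx)
  have hs0 : 0 ≤ x - n := by linarith
  have hs1 : x - n ≤ 1 := by linarith
  have h := interp (a := (n : ℝ) + 1) (by positivity) hs0 hs1
  rw [(by ring : (n:ℝ) + 1 + (x - n) = x + 1)] at h
  have h1 : Gamma ((n:ℝ) + 1) = Nat.factorial n := Real.Gamma_nat_eq_factorial n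
  have h2 : Gamma ((n:ℝ) + 1 + 1) = Nat.factorial (n + 1) := by
    rw [(by push_cast; ring : (n:ℝ) + 1 + 1 = ((n+1:ℕ):ℝ) + 1)]
    exact Real.Gamma_nat_eq_factorial (n+1)
  rw [h1, h2] at h
  have h3 : ((Nat.factorial (n+1) : ℝ)) = (Nat.factorial n : ℝ) * ((n:ℝ) + 1) := by
    rw [Nat.factorial_succ]; push_cast; ring
  have hf : (0:ℝ) < Nat.factorial n := by exact_mod_cast Nat.factorial_pos n
  calc Gamma (x+1) ≤ (Nat.factorial n : ℝ) ^ (1 - (x - n)) * (Nat.factorial (n+1) : ℝ) ^ (x - n) := h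
    _ = (Nat.factorial n : ℝ) * ((n:ℝ) + 1) ^ (x - n) := by
        rw [h3, Real.mul_rpow hf.le (by positivity), ← mul_assoc,
          ← Real.rpow_add hf, sub_add_cancel, Real.rpow_one]

lemma gamma_lower {x : ℝ} (hx : 2 ≤ x) :
    (Nat.factorial (⌊x⌋₊ + 1) : ℝ) ≤ Gamma (x + 1) * (x + 1) ^ (1 - (x - ⌊x⌋₊)) := by
  set n := ⌊x⌋₊ with hn
  have hx0 : (0:ℝ) < x := by linarith
  have hnx : (n : ℝ) ≤ x := Nat.floor_le hx0.le
  have hxn : x < (n : ℝ) + 1 := Nat.lt_floor_add_one x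
  have hs0 : 0 ≤ x - n := by linarith
  have hs1 : x - n ≤ 1 := by linarith
  have h := interp (a := x + 1) (by linarith) (by linarith : (0:ℝ) ≤ 1 - (x - n)) (by linarith)
  rw [(by push_cast; ring : x + 1 + (1 - (x - (n:ℝ))) = ((n+1:ℕ):ℝ) + 1),
    Real.Gamma_nat_eq_factorial (n+1)] at h
  have hg : 0 < Gamma (x + 1) := Gamma_pos_of_pos (by linarith)
  have h4 : Gamma (x + 1 + 1) = (x + 1) * Gamma (x + 1) := Real.Gamma_add_one (by linarith)
  rw [h4] at h
  calc (Nat.factorial (n+1) : ℝ)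
      ≤ Gamma (x+1) ^ (1 - (1 - (x - n))) * ((x+1) * Gamma (x+1)) ^ (1 - (x - n)) := h
    _ = Gamma (x+1) * (x + 1) ^ (1 - (x - n)) := by
        rw [Real.mul_rpow (by linarith) hg.le,
          (by ring : 1 - (1 - (x - (n:ℝ))) = x - n), mul_comm ((x+1) ^ (1 - (x - (n:ℝ)))),
          ← mul_assoc, ← Real.rpow_add hg, add_sub_cancel, Real.rpow_one]

lemma rpow_exp_form {x : ℝ} (hx : 0 < x) : (x / exp 1) ^ (x:ℝ) = Real.exp (x * log x - x) := by
  rw [Real.rpow_def_of_pos (by positivity), Real.log_div hx.ne' (Real.exp_ne_zero 1), Real.log_exp]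
  congr 1; ring

lemma npow_exp_form {n : ℕ} (hn : 0 < n) :
    ((n:ℝ) / exp 1) ^ n = Real.exp ((n:ℝ) * log n - n) := by
  rw [← Real.rpow_natCast ((n:ℝ)/exp 1) n, rpow_exp_form (by exact_mod_cast hn)]

lemma D_lower {x : ℝ} (hx : 2 ≤ x) :
    Real.sqrt (2 * ⌊x⌋₊) * ((⌊x⌋₊:ℝ) / exp 1) ^ (⌊x⌋₊:ℕ) * (⌊x⌋₊:ℝ) ^ (x - ⌊x⌋₊)
      ≤ Real.sqrt (2 * x) * (x / exp 1) ^ (x:ℝ) := by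
  set n := ⌊x⌋₊ with hn
  have hx0 : (0:ℝ) < x := by linarith
  have hnx : (n : ℝ) ≤ x := Nat.floor_le hx0.le
  have hn2 : (2:ℝ) ≤ (n : ℝ) := by exact_mod_cast Nat.le_floor (by exact_mod_cast hx)
  have hnpos : (0:ℝ) < n := by linarith
  have h1 : Real.sqrt (2 * n) ≤ Real.sqrt (2 * x) := Real.sqrt_le_sqrt (by linarith)
  have h2 : ((n:ℝ) / exp 1) ^ (n:ℕ) * (n:ℝ) ^ (x - n) ≤ (x / exp 1) ^ (x:ℝ) := by
    rw [npow_exp_form (Nat.cast_pos.mp hnpos), rpow_exp_form hx0,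
      Real.rpow_def_of_pos hnpos, ← Real.exp_add]
    apply Real.exp_le_exp.mpr
    have := phi_chord hnpos hx0
    nlinarith [this]
  calc Real.sqrt (2*n) * ((n:ℝ)/exp 1)^(n:ℕ) * (n:ℝ)^(x-n)
      = Real.sqrt (2*n) * (((n:ℝ)/exp 1)^(n:ℕ) * (n:ℝ)^(x-n)) := by ring
    _ ≤ Real.sqrt (2*x) * ((x/exp 1)^(x:ℝ)) := by
        apply mul_le_mul h1 h2 (by positivity) (by positivity)

lemma D_upper {x : ℝ} (hx : 2 ≤ x) :
    Real.sqrt (2 * x) * (x / exp 1) ^ (x:ℝ)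
      ≤ Real.sqrt (2 * ((⌊x⌋₊:ℝ) + 1)) * ((⌊x⌋₊:ℝ) / exp 1) ^ (⌊x⌋₊:ℕ) *
        ((⌊x⌋₊:ℝ) + 1) ^ (x - ⌊x⌋₊) := by
  set n := ⌊x⌋₊ with hn
  have hx0 : (0:ℝ) < x := by linarith
  have hnx : (n : ℝ) ≤ x := Nat.floor_le hx0.le
  have hxn : x < (n : ℝ) + 1 := Nat.lt_floor_add_one x
  have hn2 : (2:ℝ) ≤ (n : ℝ) := by exact_mod_cast Nat.le_floor (by exact_mod_cast hx)
  have hnpos : (0:ℝ) < n := by linarith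
  have h1 : Real.sqrt (2 * x) ≤ Real.sqrt (2 * ((n:ℝ)+1)) := Real.sqrt_le_sqrt (by linarith)
  have h2 : (x / exp 1) ^ (x:ℝ) ≤ ((n:ℝ) / exp 1) ^ (n:ℕ) * ((n:ℝ)+1) ^ (x - n) := by
    rw [npow_exp_form (Nat.cast_pos.mp hnpos), rpow_exp_form hx0,
      Real.rpow_def_of_pos (by linarith : (0:ℝ) < (n:ℝ)+1), ← Real.exp_add]
    apply Real.exp_le_exp.mpr
    have hc := phi_chord hx0 hnpos
    have hlog : Real.log x ≤ Real.log ((n:ℝ)+1) := Real.log_le_log hx0 (by linarith)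
    nlinarith [mul_le_mul_of_nonneg_left hlog (by linarith : (0:ℝ) ≤ x - n)]
  calc Real.sqrt (2*x) * (x/exp 1)^(x:ℝ)
      ≤ Real.sqrt (2*((n:ℝ)+1)) * (((n:ℝ)/exp 1)^(n:ℕ) * ((n:ℝ)+1)^(x-n)) := by
        apply mul_le_mul h1 h2 (by positivity) (by positivity)
    _ = _ := by ring

lemma g_upper {x : ℝ} (hx : 2 ≤ x) :
    Gamma (x+1) / (Real.sqrt (2*x) * (x/exp 1)^(x:ℝ))
      ≤ Stirling.stirlingSeq ⌊x⌋₊ * (1 + 1/(⌊x⌋₊:ℝ)) := by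
  set n := ⌊x⌋₊ with hndef
  have hx0 : (0:ℝ) < x := by linarith
  have hnx : (n : ℝ) ≤ x := Nat.floor_le hx0.le
  have hxn : x < (n : ℝ) + 1 := Nat.lt_floor_add_one x
  have hn2 : (2:ℝ) ≤ (n : ℝ) := by exact_mod_cast Nat.le_floor (by exact_mod_cast hx)
  have hnpos : (0:ℝ) < n := by linarith
  have hf : (0:ℝ) < Nat.factorial n := by exact_mod_cast Nat.factorial_pos n
  have hDpos : 0 < Real.sqrt (2*(n:ℝ)) * ((n:ℝ)/exp 1)^(n:ℕ) * (n:ℝ)^(x-n) := by positivity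
  have step := div_le_div₀ (by positivity : (0:ℝ) ≤ (Nat.factorial n : ℝ) * ((n:ℝ)+1)^(x-n))
    (gamma_upper hx) hDpos (D_lower hx)
  refine step.trans ?_
  have hsq : Real.sqrt (2*(n:ℝ)) ≠ 0 := by positivity
  have hp1 : ((n:ℝ)/exp 1)^(n:ℕ) ≠ 0 := by positivity
  have hp2 : (n:ℝ)^(x-n) ≠ 0 := by positivity
  have hp3 : ((n:ℝ)+1)^(x-n) ≠ 0 := by positivity
  have heq : (Nat.factorial n : ℝ) * ((n:ℝ)+1)^(x-n) /
      (Real.sqrt (2*(n:ℝ)) * ((n:ℝ)/exp 1)^(n:ℕ) * (n:ℝ)^(x-n))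
      = Stirling.stirlingSeq n * (((n:ℝ)+1)/(n:ℝ))^(x-n) := by
    rw [Stirling.stirlingSeq, Real.div_rpow (by positivity) hnpos.le]
    field_simp
  rw [heq]
  have hstir : (0:ℝ) ≤ Stirling.stirlingSeq n := by
    rw [Stirling.stirlingSeq]; positivity
  apply mul_le_mul_of_nonneg_left ?_ hstir
  have hb : (1:ℝ) ≤ ((n:ℝ)+1)/(n:ℝ) := by rw [le_div_iff₀ hnpos]; linarith
  calc (((n:ℝ)+1)/(n:ℝ))^(x-n) ≤ (((n:ℝ)+1)/(n:ℝ))^(1:ℝ) :=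
        Real.rpow_le_rpow_of_exponent_le hb (by linarith)
    _ = 1 + 1/(n:ℝ) := by rw [Real.rpow_one]; field_simp

lemma g_lower {x : ℝ} (hx : 2 ≤ x) :
    Stirling.stirlingSeq ⌊x⌋₊ * (((⌊x⌋₊:ℝ)+1)/((⌊x⌋₊:ℝ)+2) * Real.sqrt ((⌊x⌋₊:ℝ)/((⌊x⌋₊:ℝ)+1)))
      ≤ Gamma (x+1) / (Real.sqrt (2*x) * (x/exp 1)^(x:ℝ)) := by
  set n := ⌊x⌋₊ with hndef
  have hx0 : (0:ℝ) < x := by linarith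
  have hnx : (n : ℝ) ≤ x := Nat.floor_le hx0.le
  have hxn : x < (n : ℝ) + 1 := Nat.lt_floor_add_one x
  have hn2 : (2:ℝ) ≤ (n : ℝ) := by exact_mod_cast Nat.le_floor (by exact_mod_cast hx)
  have hnpos : (0:ℝ) < n := by linarith
  have hs0 : 0 ≤ x - n := by linarith
  have hs1 : x - n ≤ 1 := by linarith
  set B := Real.sqrt (2*((n:ℝ)+1)) * ((n:ℝ)/exp 1)^(n:ℕ) with hBdef
  have hBpos : 0 < B := by positivity
  have hDpos : 0 < Real.sqrt (2*x) * (x/exp 1)^(x:ℝ) := by positivity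
  have hg : 0 < Gamma (x+1) := Gamma_pos_of_pos (by linarith)
  have h5 : (x+1)^(1-(x-(n:ℝ))) * (Real.sqrt (2*x) * (x/exp 1)^(x:ℝ)) ≤ ((n:ℝ)+2) * B := by
    calc (x+1)^(1-(x-(n:ℝ))) * (Real.sqrt (2*x) * (x/exp 1)^(x:ℝ))
        ≤ ((n:ℝ)+2)^(1-(x-(n:ℝ))) * (B * ((n:ℝ)+1)^(x-n)) := by
          apply mul_le_mul (Real.rpow_le_rpow (by linarith) (by linarith) (by linarith))
            (by rw [hBdef, mul_assoc]; exact (by rw [← mul_assoc]; exact D_upper hx))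
            hDpos.le (by positivity)
      _ = (((n:ℝ)+2)^(1-(x-(n:ℝ))) * ((n:ℝ)+1)^(x-n)) * B := by ring
      _ ≤ (((n:ℝ)+2)^(1-(x-(n:ℝ))) * ((n:ℝ)+2)^(x-n)) * B := by
          apply mul_le_mul_of_nonneg_right _ hBpos.le
          exact mul_le_mul_of_nonneg_left
            (Real.rpow_le_rpow (by linarith) (by linarith) hs0) (by positivity)
      _ = ((n:ℝ)+2) * B := by
          rw [← Real.rpow_add (by linarith), sub_add_cancel, Real.rpow_one]
  have hmain : (Nat.factorial (n+1) : ℝ)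
      ≤ (Gamma (x+1) / (Real.sqrt (2*x) * (x/exp 1)^(x:ℝ))) * (((n:ℝ)+2) * B) := by
    have e1 : (Gamma (x+1) / (Real.sqrt (2*x) * (x/exp 1)^(x:ℝ)))
        * ((x+1)^(1-(x-(n:ℝ))) * (Real.sqrt (2*x) * (x/exp 1)^(x:ℝ)))
        = Gamma (x+1) * (x+1)^(1-(x-(n:ℝ))) := by
      field_simp
    calc (Nat.factorial (n+1) : ℝ) ≤ Gamma (x+1) * (x+1)^(1-(x-(n:ℝ))) := gamma_lower hx
      _ = _ := e1.symm
      _ ≤ _ := mul_le_mul_of_nonneg_left h5 (by positivity)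
  have hsq : Real.sqrt (2*((n:ℝ)+1)) * Real.sqrt ((n:ℝ)/((n:ℝ)+1)) = Real.sqrt (2*(n:ℝ)) := by
    rw [← Real.sqrt_mul (by positivity)]
    congr 1
    field_simp
  have hid : Stirling.stirlingSeq n * (((n:ℝ)+1)/((n:ℝ)+2) * Real.sqrt ((n:ℝ)/((n:ℝ)+1)))
      = (Nat.factorial (n+1) : ℝ) / (((n:ℝ)+2) * B) := by
    rw [Stirling.stirlingSeq, ← hsq, Nat.factorial_succ, hBdef]
    have h1 : Real.sqrt (2*((n:ℝ)+1)) ≠ 0 := by positivity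
    have h2 : Real.sqrt ((n:ℝ)/((n:ℝ)+1)) ≠ 0 := by positivity
    have h3 : ((n:ℝ)/exp 1)^(n:ℕ) ≠ 0 := by positivity
    push_cast
    field_simp
  rw [hid, div_le_iff₀ (by positivity)]
  exact hmain

lemma lim_up : Tendsto (fun n : ℕ => Stirling.stirlingSeq n * (1 + 1/(n:ℝ))) atTop
    (nhds (Real.sqrt π)) := by
  have h1 : Tendsto (fun n : ℕ => 1 + 1/(n:ℝ)) atTop (nhds 1) := by
    simpa using (tendsto_const_nhds (x := (1:ℝ))).add tendsto_one_div_atTop_nhds_zero_nat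
  simpa using Stirling.tendsto_stirlingSeq_sqrt_pi.mul h1

lemma lim_low : Tendsto (fun n : ℕ =>
    Stirling.stirlingSeq n * (((n:ℝ)+1)/((n:ℝ)+2) * Real.sqrt ((n:ℝ)/((n:ℝ)+1)))) atTop
    (nhds (Real.sqrt π)) := by
  have hb : Tendsto (fun n : ℕ => (n:ℝ)/((n:ℝ)+1)) atTop (nhds 1) :=
    tendsto_natCast_div_add_atTop (1:ℝ)
  have h1 : Tendsto (fun n : ℕ => ((n:ℝ)+1)/((n:ℝ)+2)) atTop (nhds 1) := by
    have := hb.comp (tendsto_add_atTop_nat 1)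
    refine this.congr fun n => ?_
    simp only [Function.comp_apply]
    push_cast
    ring_nf
  have h2 : Tendsto (fun n : ℕ => Real.sqrt ((n:ℝ)/((n:ℝ)+1))) atTop (nhds 1) := by
    have := (Real.continuous_sqrt.tendsto 1).comp hb
    rw [Real.sqrt_one] at this
    exact this
  simpa using Stirling.tendsto_stirlingSeq_sqrt_pi.mul (h1.mul h2)

lemma lim_g : Tendsto (fun x : ℝ => Gamma (x+1) / (Real.sqrt (2*x) * (x/exp 1)^(x:ℝ))) atTop
    (nhds (Real.sqrt π)) := by
  apply tendsto_of_tendsto_of_tendsto_of_le_of_le'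
    (lim_low.comp tendsto_nat_floor_atTop) (lim_up.comp tendsto_nat_floor_atTop)
  · filter_upwards [eventually_ge_atTop (2:ℝ)] with x hx
    exact g_lower hx
  · filter_upwards [eventually_ge_atTop (2:ℝ)] with x hx
    exact g_upper hx

noncomputable def P (x : ℝ) : ℝ :=
  8 * x ^ 3 + 4 * x ^ 2 + x +
    (1 - 11 / (8 * x) + 79 / (112 * x ^ 2) + (380279456577 / 722091376690) / x ^ 3) / 30

lemma P_pos {x : ℝ} (hx : 1 ≤ x) : 0 < P x := by
  have hx0 : (0:ℝ) < x := by linarith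
  have h1 : 11 / (8*x) ≤ 11/8 := by
    rw [div_le_div_iff₀ (by positivity) (by norm_num)]
    nlinarith
  have h2 : (0:ℝ) ≤ 79 / (112 * x^2) := by positivity
  have h3 : (0:ℝ) ≤ (380279456577 / 722091376690 : ℝ) / x^3 := by positivity
  have h4 : (1:ℝ) ≤ x^3 := by nlinarith
  unfold P
  nlinarith

lemma lim_ratio : Tendsto (fun x : ℝ => (8 * x^3 / P x) ^ ((1:ℝ)/6)) atTop (nhds 1) := by
  have hq : Continuous (fun u : ℝ => 8 + 4*u + u^2 +
      (u^3 - 11/8*u^4 + 79/112*u^5 + (380279456577 / 722091376690)*u^6)/30) := by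
    fun_prop
  have h0 : Tendsto (fun x : ℝ => (1:ℝ)/x) atTop (nhds 0) := by
    simpa [one_div] using tendsto_inv_atTop_zero (𝕜 := ℝ)
  have h1 : Tendsto (fun x : ℝ => P x / x^3) atTop (nhds 8) := by
    have := (hq.tendsto 0).comp h0
    simp only [Function.comp_def] at this
    norm_num at this
    refine this.congr' ?_
    filter_upwards [eventually_ge_atTop (1:ℝ)] with x hx
    have hx0 : x ≠ 0 := by positivity
    unfold P
    field_simp
  have h2 : Tendsto (fun x : ℝ => 8 * x^3 / P x) atTop (nhds 1) := by
    have := (tendsto_const_nhds (x := (8:ℝ))).div h1 (by norm_num : (8:ℝ) ≠ 0)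
    norm_num at this
    refine this.congr' ?_
    filter_upwards [eventually_ge_atTop (1:ℝ)] with x hx
    have hx0 : x ≠ 0 := by positivity
    have hP := (P_pos hx).ne'
    rw [Pi.div_apply]
    field_simp
  have := h2.rpow (tendsto_const_nhds (x := (1:ℝ)/6)) (Or.inl one_ne_zero)
  simpa using this

theorem stmt_10 :
    Tendsto (fun x : ℝ => Gamma (x + 1) /
      (Real.sqrt π * (x / exp 1) ^ x *
        (8 * x ^ 3 + 4 * x ^ 2 + x +
          (1 - 11 / (8 * x) + 79 / (112 * x ^ 2) +
            (380279456577 / 722091376690) / x ^ 3) / 30) ^ ((1:ℝ)/6))) atTop (nhds 1) := by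
  have hsp : Real.sqrt π ≠ 0 := by positivity
  have key : Tendsto (fun x : ℝ =>
      (Gamma (x+1) / (Real.sqrt (2*x) * (x/exp 1)^(x:ℝ))) *
        ((8 * x^3 / P x) ^ ((1:ℝ)/6) / Real.sqrt π)) atTop (nhds 1) := by
    have := lim_g.mul (lim_ratio.div_const (Real.sqrt π))
    have e : Real.sqrt π * (1 / Real.sqrt π) = 1 := by
      rw [mul_one_div, div_self hsp]
    rwa [e] at this
  refine key.congr' ?_
  filter_upwards [eventually_ge_atTop (2:ℝ)] with x hx
  have hx0 : (0:ℝ) < x := by linarith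
  have hP : 0 < P x := P_pos (by linarith)
  have h2x : Real.sqrt (2*x) ≠ 0 := by positivity
  have hxe : (x/exp 1)^(x:ℝ) ≠ 0 := (Real.rpow_pos_of_pos (by positivity) x).ne'
  have hP6 : (P x) ^ ((1:ℝ)/6) ≠ 0 := (Real.rpow_pos_of_pos hP _).ne'
  have e2 : Real.sqrt (2*x) = (8*x^3) ^ ((1:ℝ)/6) := by
    rw [show (8*x^3 : ℝ) = (2*x)^(3:ℕ) by ring, ← Real.rpow_natCast (2*x) 3,
      ← Real.rpow_mul (by positivity), show ((3:ℕ):ℝ) * ((1:ℝ)/6) = 1/2 by norm_num,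
      Real.sqrt_eq_rpow]
  have e3 : (8*x^3 / P x) ^ ((1:ℝ)/6) = (8*x^3) ^ ((1:ℝ)/6) / (P x) ^ ((1:ℝ)/6) :=
    Real.div_rpow (by positivity) hP.le _
  show (Gamma (x+1) / (Real.sqrt (2*x) * (x/exp 1)^(x:ℝ))) *
        ((8 * x^3 / P x) ^ ((1:ℝ)/6) / Real.sqrt π)
      = Gamma (x + 1) / (Real.sqrt π * (x / exp 1) ^ x * (P x) ^ ((1:ℝ)/6))
  rw [e3, ← e2]
  field_simp
end
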